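/- arXiv:0906.1771 — 9 statements merged into one kernel-verified Lean document; each statement's English description precedes it below -/
import Mathlib

section
/- Let G be an infinite profinite group. Then the following are equivalent: (i) G is just infinite; (ii) for every open subgroup H of G, the set K_H = {K : K is an open normal subgroup of G with K not contained in H} is finite; (iii) there exists a family F of open subgroups of G whose intersection is trivial, such that the set K_H = {K : K is an open normal subgroup of G with K not contained in H} is finite for every H in F. -/
open scoped Pointwise

section CountingAux

variable {G : Type*} [Group G]

lemma aux_finite_above (U : Subgroup G) (hUn : U.Normal) (hUf : U.FiniteIndex) :
    Finite {M : Subgroup G // U ≤ M} := by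
  haveI := hUn
  haveI := hUf
  haveI : Finite (Subgroup (G ⧸ U)) :=
    Finite.of_injective (fun M => (M : Set (G ⧸ U))) SetLike.coe_injective
  apply Finite.of_injective
    (fun M : {M : Subgroup G // U ≤ M} => Subgroup.map (QuotientGroup.mk' U) M.1)
  intro M₁ M₂ h
  have h' := congrArg (Subgroup.comap (QuotientGroup.mk' U)) h
  rw [Subgroup.comap_map_eq, Subgroup.comap_map_eq, QuotientGroup.ker_mk',
    sup_eq_left.mpr M₁.2, sup_eq_left.mpr M₂.2] at h'
  exact Subtype.ext h'

lemma aux_crt (N P Q C : Subgroup G) (hQn : Q.Normal) (hPQn : (P ⊓ Q).Normal)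
    (hPN : P ≤ N) (hCN : C ≤ N) (h1 : P ⊔ Q = N) (h2 : C ⊔ (P ⊓ Q) = N) :
    (C ⊓ P) ⊔ Q = N := by
  haveI := hQn
  haveI := hPQn
  have hQN : Q ≤ N := h1 ▸ le_sup_right
  refine le_antisymm (sup_le (inf_le_left.trans hCN) hQN) ?_
  intro x hx
  have hx1 : x ∈ (P : Set G) * (Q : Set G) := by
    rw [← Subgroup.mul_normal P Q, h1]
    exact hx
  rw [Set.mem_mul] at hx1
  obtain ⟨p, hp, q, hq, rfl⟩ := hx1
  have hp2 : p ∈ (C : Set G) * ((P ⊓ Q : Subgroup G) : Set G) := by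
    rw [← Subgroup.mul_normal C (P ⊓ Q), h2]
    exact hPN hp
  rw [Set.mem_mul] at hp2
  obtain ⟨c, hc, w, hw, rfl⟩ := hp2
  have hwPQ : w ∈ P ⊓ Q := hw
  have hcP : c ∈ P := by
    have : (c * w) * w⁻¹ ∈ P := P.mul_mem hp (P.inv_mem hwPQ.1)
    simpa using this
  have h3 : c * w * q = c * (w * q) := mul_assoc _ _ _
  rw [h3]
  exact Subgroup.mul_mem _ (Subgroup.mem_sup_left ⟨hc, hcP⟩)
    (Subgroup.mem_sup_right (Q.mul_mem hwPQ.2 hq))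

end CountingAux

section TopAux

variable {G : Type*} [Group G] [TopologicalSpace G] [IsTopologicalGroup G] [CompactSpace G]

lemma aux_finiteIndex_of_isOpen (U : Subgroup G) (hU : IsOpen (U : Set G)) :
    U.FiniteIndex :=
  haveI : Finite (G ⧸ U) := U.quotient_finite_of_isOpen hU
  Subgroup.finiteIndex_of_finite_quotient (H := U)

variable [T2Space G] [TotallyDisconnectedSpace G]

lemma aux_exists_openNormal {W : Set G} (hW : IsOpen W) (h1 : (1 : G) ∈ W) :
    ∃ U : Subgroup G, U.Normal ∧ IsOpen (U : Set G) ∧ (U : Set G) ⊆ W := by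
  obtain ⟨V, hVc, h1V, hVW⟩ := compact_exists_isClopen_in_isOpen hW h1
  obtain ⟨N, hNV⟩ := IsTopologicalGroup.exist_openNormalSubgroup_sub_clopen_nhds_of_one hVc h1V
  exact ⟨N.toOpenSubgroup.toSubgroup, N.isNormal', N.toOpenSubgroup.isOpen,
    fun x hx => hVW (hNV hx)⟩

end TopAux

/-- **Generalised obliquity theorem** (Theorem A).  Let `G` be an infinite profinite
group.  Then the following are equivalent: (i) `G` is just infinite (every nontrivial
closed normal subgroup has finite index); (ii) for every open subgroup `H` of `G` the
set of open normal subgroups of `G` not contained in `H` is finite; (iii) there is a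
family `F` of open subgroups of `G` with trivial intersection such that for every
`H ∈ F` the set of open normal subgroups of `G` not contained in `H` is finite. -/
theorem generalized_obliquity (G : Type*) [Group G] [TopologicalSpace G]
    [IsTopologicalGroup G] [CompactSpace G] [T2Space G] [TotallyDisconnectedSpace G]
    [Infinite G] :
    List.TFAE
      [ ∀ N : Subgroup G, N.Normal → IsClosed (N : Set G) → N ≠ ⊥ → N.FiniteIndex,
        ∀ H : Subgroup G, IsOpen (H : Set G) →
          {K : Subgroup G | K.Normal ∧ IsOpen (K : Set G) ∧ ¬ K ≤ H}.Finite,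
        ∃ F : Set (Subgroup G), (∀ H ∈ F, IsOpen (H : Set G)) ∧ sInf F = ⊥ ∧
          ∀ H ∈ F, {K : Subgroup G | K.Normal ∧ IsOpen (K : Set G) ∧ ¬ K ≤ H}.Finite ] := by
  tfae_have 1 → 2 := by
    intro hJI H hH
    classical
    by_contra hSfin
    set S : Set (Subgroup G) := {K | K.Normal ∧ IsOpen (K : Set G) ∧ ¬ K ≤ H} with hSdef
    have hSinf : S.Infinite := hSfin
    -- the collection of open normal subgroups below which infinitely many members of S live
    set 𝒩 : Set (Subgroup G) :=
      {N | N.Normal ∧ IsOpen (N : Set G) ∧ {K | K ∈ S ∧ K ≤ N}.Infinite} with h𝒩def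
    have htop𝒩 : (⊤ : Subgroup G) ∈ 𝒩 := by
      refine ⟨inferInstance, by rw [Subgroup.coe_top]; exact isOpen_univ, ?_⟩
      have : {K | K ∈ S ∧ K ≤ (⊤ : Subgroup G)} = S := by
        ext K; simp
      rw [this]
      exact hSinf
    -- members of 𝒩 contain points outside H
    have h𝒩out : ∀ N ∈ 𝒩, ((N : Set G) \ (H : Set G)).Nonempty := by
      rintro N ⟨-, -, hinf⟩
      obtain ⟨K, hKS, hKle⟩ := hinf.nonempty
      obtain ⟨-, -, hKH⟩ := hKS
      have : ¬(K : Set G) ⊆ (H : Set G) := fun hsub => hKH fun y hy => hsub hy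
      obtain ⟨y, hyK, hyH⟩ := Set.not_subset.mp this
      exact ⟨y, hKle hyK, hyH⟩
    -- a minimal member of 𝒩
    have hmin : ∃ Ns ∈ 𝒩, ∀ M ∈ 𝒩, M ≤ Ns → M = Ns := by
      by_contra hc
      push_neg at hc
      have hstep : ∀ P : Subgroup G, ∃ P' : Subgroup G, P ∈ 𝒩 → (P' ∈ 𝒩 ∧ P' < P) := by
        intro P
        by_cases hP : P ∈ 𝒩
        · obtain ⟨M, hM, hle, hne⟩ := hc P hP
          exact ⟨M, fun _ => ⟨hM, lt_of_le_of_ne hle hne⟩⟩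
        · exact ⟨P, fun h => absurd h hP⟩
      choose f hf using hstep
      set g : ℕ → Subgroup G := fun n => f^[n] ⊤ with hgdef
      have hgsucc : ∀ n, g (n + 1) = f (g n) := by
        intro n
        simp only [hgdef, Function.iterate_succ_apply']
      have hgmem : ∀ n, g n ∈ 𝒩 := by
        intro n
        induction n with
        | zero => simpa [hgdef] using htop𝒩
        | succ k ih => rw [hgsucc]; exact (hf (g k) ih).1
      have hglt : ∀ n, g (n + 1) < g n := by
        intro n
        rw [hgsucc]
        exact (hf (g n) (hgmem n)).2
      have hA : ∀ n, ((g n : Set G) \ (H : Set G)).Nonempty := fun n => h𝒩out _ (hgmem n)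
      have hAcl : ∀ n, IsClosed ((g n : Set G) \ (H : Set G)) :=
        fun n => (Subgroup.isClosed_of_isOpen _ (hgmem n).2.1).sdiff hH
      have hinter : (⋂ n, ((g n : Set G) \ (H : Set G))).Nonempty := by
        apply IsCompact.nonempty_iInter_of_sequence_nonempty_isCompact_isClosed
        · intro i
          exact Set.diff_subset_diff_left (SetLike.coe_subset_coe.mpr (hglt i).le)
        · exact hA
        · exact (hAcl 0).isCompact
        · exact hAcl
      obtain ⟨x, hx⟩ := hinter
      rw [Set.mem_iInter] at hx
      have hxg : ∀ n, x ∈ g n := fun n => (hx n).1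
      have hxH : x ∉ (H : Set G) := (hx 0).2
      set W : Subgroup G := ⨅ n, g n with hWdef
      have hxW : x ∈ W := Subgroup.mem_iInf.mpr hxg
      have hWn : W.Normal := by
        constructor
        intro a ha gg
        rw [Subgroup.mem_iInf] at ha ⊢
        intro n
        exact (hgmem n).1.conj_mem a (ha n) gg
      have hWcl : IsClosed (W : Set G) := by
        rw [Subgroup.coe_iInf]
        exact isClosed_iInter fun n => Subgroup.isClosed_of_isOpen _ (hgmem n).2.1
      have hWbot : W ≠ ⊥ := by
        intro hb
        rw [hb, Subgroup.mem_bot] at hxW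
        exact hxH (hxW ▸ H.one_mem)
      haveI := aux_finite_above W hWn (hJI W hWn hWcl hWbot)
      have hginj : Function.Injective g := (strictAnti_nat_of_succ_lt hglt).injective
      have hinj : Function.Injective
          (fun n : ℕ => (⟨g n, iInf_le g n⟩ : {M : Subgroup G // W ≤ M})) := by
        intro a b hab
        exact hginj (congrArg Subtype.val hab)
      haveI := Finite.of_injective _ hinj
      exact not_finite ℕ
    obtain ⟨Ns, hNs𝒩, hNsmin⟩ := hmin
    obtain ⟨hNsnormal, hNsopen, hNsinf⟩ := hNs𝒩
    -- key: for any open normal U ≤ Ns there is a proper K ∈ S, K ≤ Ns with K ⊔ U = Ns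
    have key : ∀ U : Subgroup G, U.Normal → IsOpen (U : Set G) → U ≤ Ns →
        ∃ K, K ∈ S ∧ K ≤ Ns ∧ K ≠ Ns ∧ K ⊔ U = Ns := by
      intro U hUn hUo hUle
      haveI : Finite {M : Subgroup G // U ≤ M} :=
        aux_finite_above U hUn (aux_finiteIndex_of_isOpen U hUo)
      haveI : Infinite {K // K ∈ {K | K ∈ S ∧ K ≤ Ns}} := hNsinf.to_subtype
      obtain ⟨⟨M, hUM⟩, hMinf⟩ := Finite.exists_infinite_fiber
        (fun K : {K // K ∈ {K | K ∈ S ∧ K ≤ Ns}} =>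
          (⟨K.1 ⊔ U, le_sup_right⟩ : {M : Subgroup G // U ≤ M}))
      set T2 : Set (Subgroup G) := {K | (K ∈ S ∧ K ≤ Ns) ∧ K ⊔ U = M} with hT2def
      have hT2inf : T2.Infinite := by
        haveI := hMinf
        have hfib : ∀ K : {x // x ∈ (fun K : {K // K ∈ {K | K ∈ S ∧ K ≤ Ns}} =>
            (⟨K.1 ⊔ U, le_sup_right⟩ : {M : Subgroup G // U ≤ M})) ⁻¹' {⟨M, hUM⟩}},
            (K.1.1 : Subgroup G) ∈ T2 := by
          rintro ⟨⟨K, hK⟩, hKfib⟩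
          simp only [Set.mem_preimage, Set.mem_singleton_iff] at hKfib
          exact ⟨hK, congrArg Subtype.val hKfib⟩
        apply Set.infinite_of_injective_forall_mem
          (f := fun K : {x // x ∈ (fun K : {K // K ∈ {K | K ∈ S ∧ K ≤ Ns}} =>
            (⟨K.1 ⊔ U, le_sup_right⟩ : {M : Subgroup G // U ≤ M})) ⁻¹' {⟨M, hUM⟩}} =>
            (K.1.1 : Subgroup G)) ?_ hfib
        intro a b hab
        exact Subtype.ext (Subtype.ext hab)
      have hT2ne : T2.Nonempty := hT2inf.nonempty
      obtain ⟨K0, ⟨⟨hK0S, hK0le⟩, hK0sup⟩⟩ := hT2ne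
      obtain ⟨hK0n, hK0o, -⟩ := hK0S
      have hUleM : U ≤ M := hUM
      have hMopen : IsOpen (M : Set G) := Subgroup.isOpen_mono hUleM hUo
      have hMnormal : M.Normal := by
        haveI := hK0n; haveI := hUn
        rw [← hK0sup]
        infer_instance
      have hMle : M ≤ Ns := by
        rw [← hK0sup]
        exact sup_le hK0le hUle
      have hM𝒩 : M ∈ 𝒩 := by
        refine ⟨hMnormal, hMopen, hT2inf.mono ?_⟩
        rintro K ⟨⟨hKS, -⟩, hKsup⟩
        exact ⟨hKS, hKsup ▸ le_sup_left⟩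
      have hMeq : M = Ns := hNsmin M hM𝒩 hMle
      have hne : (T2 \ {Ns}).Nonempty := (hT2inf.diff (Set.finite_singleton Ns)).nonempty
      obtain ⟨K, ⟨⟨hKS, hKle⟩, hKsup⟩, hKne⟩ := hne
      exact ⟨K, hKS, hKle, by simpa using hKne, by rw [hKsup, hMeq]⟩
    -- recursively pick the sequence
    have pick : ∀ P : Subgroup G, ∃ K : Subgroup G,
        (P.Normal ∧ IsOpen (P : Set G) ∧ P ≤ Ns) →
        (K ∈ S ∧ K ≤ Ns ∧ K ≠ Ns ∧ K ⊔ P = Ns) := by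
      intro P
      by_cases hP : P.Normal ∧ IsOpen (P : Set G) ∧ P ≤ Ns
      · obtain ⟨K, h⟩ := key P hP.1 hP.2.1 hP.2.2
        exact ⟨K, fun _ => h⟩
      · exact ⟨⊤, fun h => absurd h hP⟩
    choose pk hpk using pick
    set R : ℕ → Subgroup G := fun n => Nat.rec Ns (fun _ Rk => Rk ⊓ pk Rk) n with hRdef
    set KK : ℕ → Subgroup G := fun n => pk (R n) with hKKdef
    have hR0 : R 0 = Ns := rfl
    have hRsucc : ∀ n, R (n + 1) = R n ⊓ KK n := fun n => rfl
    have hRinv : ∀ n, (R n).Normal ∧ IsOpen ((R n : Subgroup G) : Set G) ∧ R n ≤ Ns := by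
      intro n
      induction n with
      | zero => exact ⟨hNsnormal, hNsopen, le_rfl⟩
      | succ k ih =>
        obtain ⟨⟨hKn, hKo, -⟩, hKle, -, -⟩ := hpk (R k) ih
        refine ⟨?_, ?_, (hRsucc k ▸ inf_le_left).trans ih.2.2⟩
        · haveI := ih.1
          haveI := hKn
          rw [hRsucc]
          infer_instance
        · rw [hRsucc, Subgroup.coe_inf]
          exact ih.2.1.inter hKo
    have hKfacts : ∀ n, KK n ∈ S ∧ KK n ≤ Ns ∧ KK n ≠ Ns ∧ KK n ⊔ R n = Ns :=
      fun n => hpk (R n) (hRinv n)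
    have hRle : ∀ n, R (n + 1) ≤ R n := fun n => hRsucc n ▸ inf_le_left
    have hRanti : Antitone R := antitone_nat_of_succ_le hRle
    have hRK : ∀ j n, j < n → R n ≤ KK j := by
      intro j n hjn
      calc R n ≤ R (j + 1) := hRanti hjn
      _ ≤ KK j := hRsucc j ▸ inf_le_right
    have hKinj : Function.Injective KK := by
      have haux : ∀ a b, a < b → KK a = KK b → False := by
        intro a b hab heq
        have h1 : KK b ⊔ R b = Ns := (hKfacts b).2.2.2
        have h2 : KK b ⊔ R b ≤ KK a := sup_le (le_of_eq heq.symm) (hRK a b hab)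
        exact (hKfacts a).2.2.1 (le_antisymm (hKfacts a).2.1 (h1 ▸ h2))
      intro a b hab
      rcases lt_trichotomy a b with h | h | h
      · exact absurd hab (fun hh => haux a b h hh)
      · exact h
      · exact absurd hab.symm (fun hh => haux b a h hh)
    -- even and odd partial intersections
    set Ef : ℕ → Subgroup G := fun n => (Finset.range (n + 1)).inf (fun j => KK (2 * j))
      with hEfdef
    set Of : ℕ → Subgroup G := fun n => (Finset.range (n + 1)).inf (fun j => KK (2 * j + 1))
      with hOfdef
    have hEfsucc : ∀ n, Ef (n + 1) = Ef n ⊓ KK (2 * (n + 1)) := by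
      intro n
      rw [hEfdef]
      simp only [Finset.range_add_one (n := n + 1), Finset.inf_insert]
      rw [inf_comm]
    have hOfsucc : ∀ n, Of (n + 1) = Of n ⊓ KK (2 * (n + 1) + 1) := by
      intro n
      rw [hOfdef]
      simp only [Finset.range_add_one (n := n + 1), Finset.inf_insert]
      rw [inf_comm]
    have hEf0 : Ef 0 = KK 0 := by
      rw [hEfdef]
      simp
    have hOf0 : Of 0 = KK 1 := by
      rw [hOfdef]
      simp
    have hEfle : ∀ n j, j ≤ n → Ef n ≤ KK (2 * j) := by
      intro n j hj
      exact Finset.inf_le (Finset.mem_range.mpr (by omega))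
    have hOfle : ∀ n j, j ≤ n → Of n ≤ KK (2 * j + 1) := by
      intro n j hj
      exact Finset.inf_le (Finset.mem_range.mpr (by omega))
    have hKKprops : ∀ m, (KK m).Normal ∧ IsOpen ((KK m : Subgroup G) : Set G) ∧ KK m ≤ Ns := by
      intro m
      obtain ⟨⟨h1, h2, -⟩, h3, -, -⟩ := hKfacts m
      exact ⟨h1, h2, h3⟩
    have hEfprops : ∀ n, (Ef n).Normal ∧ IsOpen ((Ef n : Subgroup G) : Set G) ∧ Ef n ≤ Ns := by
      intro n
      induction n with
      | zero =>
        rw [hEf0]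
        exact hKKprops 0
      | succ k ih =>
        refine ⟨?_, ?_, (hEfsucc k ▸ inf_le_left).trans ih.2.2⟩
        · haveI := ih.1
          haveI := (hKKprops (2 * (k + 1))).1
          rw [hEfsucc]
          infer_instance
        · rw [hEfsucc, Subgroup.coe_inf]
          exact ih.2.1.inter (hKKprops (2 * (k + 1))).2.1
    have hOfprops : ∀ n, (Of n).Normal ∧ IsOpen ((Of n : Subgroup G) : Set G) ∧ Of n ≤ Ns := by
      intro n
      induction n with
      | zero =>
        rw [hOf0]
        exact hKKprops 1
      | succ k ih =>
        refine ⟨?_, ?_, (hOfsucc k ▸ inf_le_left).trans ih.2.2⟩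
        · haveI := ih.1
          haveI := (hKKprops (2 * (k + 1) + 1)).1
          rw [hOfsucc]
          infer_instance
        · rw [hOfsucc, Subgroup.coe_inf]
          exact ih.2.1.inter (hKKprops (2 * (k + 1) + 1)).2.1
    -- CRT chain: Ef n ⊔ Of n = Ns
    have hsup : ∀ n, Ef n ⊔ Of n = Ns := by
      intro n
      induction n with
      | zero =>
        have hR1 : R 1 = KK 0 := by
          have h01 : R 1 = Ns ⊓ KK 0 := by
            have h := hRsucc 0
            rwa [hR0] at h
          rw [h01]
          exact inf_eq_right.mpr (hKfacts 0).2.1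
        have h := (hKfacts 1).2.2.2
        rw [hR1] at h
        rw [hEf0, hOf0, sup_comm]
        exact h
      | succ n ih =>
        have hstep1 : (KK (2 * (n + 1)) ⊓ Ef n) ⊔ Of n = Ns := by
          apply aux_crt Ns (Ef n) (Of n) (KK (2 * (n + 1))) (hOfprops n).1 ?_
            (hEfprops n).2.2 (hKKprops (2 * (n + 1))).2.2 ih ?_
          · haveI := (hEfprops n).1
            haveI := (hOfprops n).1
            infer_instance
          · apply le_antisymm
            · exact sup_le (hKKprops (2 * (n + 1))).2.2
                (inf_le_left.trans (hEfprops n).2.2)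
            · have h1 : KK (2 * (n + 1)) ⊔ R (2 * (n + 1)) = Ns := (hKfacts (2 * (n + 1))).2.2.2
              have h2 : R (2 * (n + 1)) ≤ Ef n ⊓ Of n := by
                refine le_inf ?_ ?_
                · refine Finset.le_inf fun j hj => ?_
                  exact hRK (2 * j) (2 * (n + 1)) (by rw [Finset.mem_range] at hj; omega)
                · refine Finset.le_inf fun j hj => ?_
                  exact hRK (2 * j + 1) (2 * (n + 1)) (by rw [Finset.mem_range] at hj; omega)
              calc Ns = KK (2 * (n + 1)) ⊔ R (2 * (n + 1)) := h1.symm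
              _ ≤ KK (2 * (n + 1)) ⊔ (Ef n ⊓ Of n) := sup_le_sup_left h2 _
        have hstep1' : Ef (n + 1) ⊔ Of n = Ns := by
          rw [hEfsucc n, inf_comm]
          exact hstep1
        have hstep2 : (KK (2 * (n + 1) + 1) ⊓ Of n) ⊔ Ef (n + 1) = Ns := by
          apply aux_crt Ns (Of n) (Ef (n + 1)) (KK (2 * (n + 1) + 1)) (hEfprops (n + 1)).1 ?_
            (hOfprops n).2.2 (hKKprops (2 * (n + 1) + 1)).2.2 (by rw [sup_comm]; exact hstep1') ?_
          · haveI := (hOfprops n).1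
            haveI := (hEfprops (n + 1)).1
            infer_instance
          · apply le_antisymm
            · exact sup_le (hKKprops (2 * (n + 1) + 1)).2.2
                (inf_le_left.trans (hOfprops n).2.2)
            · have h1 : KK (2 * (n + 1) + 1) ⊔ R (2 * (n + 1) + 1) = Ns :=
                (hKfacts (2 * (n + 1) + 1)).2.2.2
              have h2 : R (2 * (n + 1) + 1) ≤ Of n ⊓ Ef (n + 1) := by
                refine le_inf ?_ ?_
                · refine Finset.le_inf fun j hj => ?_
                  exact hRK (2 * j + 1) (2 * (n + 1) + 1) (by rw [Finset.mem_range] at hj; omega)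
                · refine Finset.le_inf fun j hj => ?_
                  exact hRK (2 * j) (2 * (n + 1) + 1) (by rw [Finset.mem_range] at hj; omega)
              calc Ns = KK (2 * (n + 1) + 1) ⊔ R (2 * (n + 1) + 1) := h1.symm
              _ ≤ KK (2 * (n + 1) + 1) ⊔ (Of n ⊓ Ef (n + 1)) := sup_le_sup_left h2 _
        rw [hOfsucc n, inf_comm, sup_comm]
        exact hstep2
    -- the total even/odd intersections are trivial
    have hbot : ∀ c : ℕ, (⨅ n : ℕ, KK (2 * n + c)) = ⊥ := by
      intro c
      by_contra hne
      set Einf : Subgroup G := ⨅ n : ℕ, KK (2 * n + c) with hEinfdef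
      have hnormal : Einf.Normal := by
        constructor
        intro a ha gg
        rw [Subgroup.mem_iInf] at ha ⊢
        intro n
        exact (hKKprops (2 * n + c)).1.conj_mem a (ha n) gg
      have hclosed : IsClosed (Einf : Set G) := by
        rw [Subgroup.coe_iInf]
        exact isClosed_iInter fun n => Subgroup.isClosed_of_isOpen _ (hKKprops (2 * n + c)).2.1
      haveI := aux_finite_above Einf hnormal (hJI Einf hnormal hclosed hne)
      have hinj : Function.Injective
          (fun n : ℕ => (⟨KK (2 * n + c), iInf_le _ n⟩ : {M : Subgroup G // Einf ≤ M})) := by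
        intro a b hab
        have := hKinj (congrArg Subtype.val hab)
        omega
      haveI := Finite.of_injective _ hinj
      exact not_finite ℕ
    -- final compactness argument
    obtain ⟨x, hxNs, hxH⟩ := h𝒩out Ns ⟨hNsnormal, hNsopen, hNsinf⟩
    set A : ℕ → Set (G × G) :=
      fun n => {p | p.1 ∈ Ef n ∧ p.2 ∈ Of n ∧ p.1 * p.2 = x} with hAdef
    have hAne : ∀ n, (A n).Nonempty := by
      intro n
      have hx2 : x ∈ ((Ef n ⊔ Of n : Subgroup G) : Set G) := by
        rw [hsup n]
        exact hxNs
      haveI : (Of n).Normal := (hOfprops n).1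
      rw [Subgroup.mul_normal, Set.mem_mul] at hx2
      obtain ⟨p, hp, q, hq, hpq⟩ := hx2
      exact ⟨(p, q), hp, hq, hpq⟩
    have hAdec : ∀ n, A (n + 1) ⊆ A n := by
      intro n p hp
      exact ⟨(hEfsucc n ▸ inf_le_left : Ef (n + 1) ≤ Ef n) hp.1,
        (hOfsucc n ▸ inf_le_left : Of (n + 1) ≤ Of n) hp.2.1, hp.2.2⟩
    have hAcl : ∀ n, IsClosed (A n) := by
      intro n
      have h1 : IsClosed {p : G × G | p.1 ∈ Ef n} :=
        (Subgroup.isClosed_of_isOpen _ (hEfprops n).2.1).preimage continuous_fst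
      have h2 : IsClosed {p : G × G | p.2 ∈ Of n} :=
        (Subgroup.isClosed_of_isOpen _ (hOfprops n).2.1).preimage continuous_snd
      have h3 : IsClosed {p : G × G | p.1 * p.2 = x} :=
        isClosed_singleton.preimage (continuous_fst.mul continuous_snd)
      have : A n = {p : G × G | p.1 ∈ Ef n} ∩ ({p : G × G | p.2 ∈ Of n} ∩
          {p : G × G | p.1 * p.2 = x}) := by
        rfl
      rw [this]
      exact h1.inter (h2.inter h3)
    have hAinter : (⋂ n, A n).Nonempty := by
      apply IsCompact.nonempty_iInter_of_sequence_nonempty_isCompact_isClosed A hAdec hAne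
        (hAcl 0).isCompact hAcl
    obtain ⟨⟨e, o⟩, hmem⟩ := hAinter
    rw [Set.mem_iInter] at hmem
    have he : e ∈ (⨅ n : ℕ, KK (2 * n + 0)) := by
      rw [Subgroup.mem_iInf]
      intro j
      have h := (hmem j).1
      have := hEfle j j le_rfl h
      simpa using this
    have ho : o ∈ (⨅ n : ℕ, KK (2 * n + 1)) := by
      rw [Subgroup.mem_iInf]
      intro j
      have h := (hmem j).2.1
      exact hOfle j j le_rfl h
    rw [hbot 0, Subgroup.mem_bot] at he
    rw [hbot 1, Subgroup.mem_bot] at ho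
    have hx1 : x = 1 := by
      rw [← (hmem 0).2.2, he, ho, one_mul]
    exact hxH (hx1 ▸ H.one_mem)
  tfae_have 2 → 3 := by
    intro h2
    refine ⟨{H | IsOpen (H : Set G)}, fun H hH => hH, ?_, fun H hH => h2 H hH⟩
    rw [eq_bot_iff]
    intro x hx
    rw [Subgroup.mem_sInf] at hx
    rw [Subgroup.mem_bot]
    by_contra hx1
    obtain ⟨U, hUn, hUo, hUW⟩ := aux_exists_openNormal (W := ({x}ᶜ : Set G))
      isClosed_singleton.isOpen_compl (fun h => hx1 (Set.eq_of_mem_singleton h).symm)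
    exact hUW (hx U hUo) rfl
  tfae_have 3 → 1 := by
    intro h3
    obtain ⟨F, hFo, hFinf, hFfin⟩ := h3
    intro N hNn hNcl hNbot
    have hex : ∃ x ∈ N, x ≠ (1 : G) := by
      by_contra hc
      push_neg at hc
      exact hNbot (eq_bot_iff.mpr fun x hx => Subgroup.mem_bot.mpr (hc x hx))
    obtain ⟨x, hxN, hx1⟩ := hex
    have hexH : ∃ H ∈ F, x ∉ H := by
      by_contra hc
      push_neg at hc
      have : x ∈ sInf F := Subgroup.mem_sInf.mpr hc
      rw [hFinf, Subgroup.mem_bot] at this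
      exact hx1 this
    obtain ⟨H, hHF, hxH⟩ := hexH
    have hSfin := hFfin H hHF
    set T : Set (Subgroup G) :=
      (fun U => N ⊔ U) '' {U : Subgroup G | U.Normal ∧ IsOpen (U : Set G)} with hTdef
    have hTsub : T ⊆ {K | K.Normal ∧ IsOpen (K : Set G) ∧ ¬ K ≤ H} := by
      rintro _ ⟨U, ⟨hUn, hUo⟩, rfl⟩
      haveI := hNn; haveI := hUn
      exact ⟨inferInstance, Subgroup.isOpen_mono le_sup_right hUo,
        fun hle => hxH (hle (Subgroup.mem_sup_left hxN))⟩
    have hTfin : T.Finite := hSfin.subset hTsub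
    have hNset : (N : Set G) = ⋂ V ∈ T, (V : Set G) := by
      apply Set.Subset.antisymm
      · intro y hy
        rw [Set.mem_iInter₂]
        rintro _ ⟨U, -, rfl⟩
        exact Subgroup.mem_sup_left hy
      · intro y hy
        rw [Set.mem_iInter₂] at hy
        by_contra hyN
        have hWo : IsOpen {g : G | y * g ∈ ((N : Set G))ᶜ} := by
          have : {g : G | y * g ∈ ((N : Set G))ᶜ} = (fun g => y * g) ⁻¹' ((N : Set G))ᶜ := rfl
          rw [this]
          exact hNcl.isOpen_compl.preimage (continuous_const.mul continuous_id)
        have h1W : (1 : G) ∈ {g : G | y * g ∈ ((N : Set G))ᶜ} := by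
          simpa using hyN
        obtain ⟨U, hUn, hUo, hUsub⟩ := aux_exists_openNormal hWo h1W
        have hyV : y ∈ ((N ⊔ U : Subgroup G) : Set G) := hy (N ⊔ U) ⟨U, ⟨hUn, hUo⟩, rfl⟩
        haveI := hUn
        rw [Subgroup.mul_normal] at hyV
        rw [Set.mem_mul] at hyV
        obtain ⟨n, hn, u, hu, hnu⟩ := hyV
        have hu' : u⁻¹ ∈ (U : Set G) := U.inv_mem hu
        have : y * u⁻¹ ∈ ((N : Set G))ᶜ := hUsub hu'
        apply this
        have : y * u⁻¹ = n := by rw [← hnu]; group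
        rw [this]
        exact hn
    have hNopen : IsOpen (N : Set G) := by
      rw [hNset]
      exact hTfin.isOpen_biInter fun V hV => (hTsub hV).2.1
    exact aux_finiteIndex_of_isOpen N hNopen
  tfae_finish
end

section
/- Let G be a just infinite profinite group and let n be a positive integer. Then G has only finitely many open subgroups of index n. -/
/-- A topological group is just infinite if it is infinite and every nontrivial
closed normal subgroup has finite index. -/
def JustInfinite (G : Type*) [Group G] [TopologicalSpace G] : Prop :=
  Infinite G ∧ ∀ N : Subgroup G, N.Normal → IsClosed (N : Set G) → N ≠ ⊥ → N.FiniteIndex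

section Aux

variable {G : Type*} [Group G]

/-- A finite-index subgroup of an infinite group is infinite. -/
lemma aux_infinite_subgroup_of_finiteIndex [Infinite G] (W : Subgroup G) [W.FiniteIndex] :
    Infinite W := by
  by_contra h
  haveI hfin : Finite W := not_infinite_iff_finite.mp h
  haveI : Finite (G ⧸ W) := Subgroup.finite_quotient_of_finiteIndex (H := W)
  haveI : Finite G := Finite.of_equiv ((G ⧸ W) × W) Subgroup.groupEquivQuotientProdSubgroup.symm
  exact not_finite G

variable [TopologicalSpace G]

/-- Key lemma: in a just infinite topological group, the intersection of all closed normal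
subgroups of finite index at most `m` is nontrivial. -/
lemma aux_iInf_ne_bot (hG : JustInfinite G) (m : ℕ) (hm : 1 ≤ m) :
    (⨅ N ∈ {N : Subgroup G | N.Normal ∧ IsClosed (N : Set G) ∧ N.FiniteIndex ∧ N.index ≤ m},
      N) ≠ ⊥ := by
  haveI : Infinite G := hG.1
  set 𝒩 : Set (Subgroup G) :=
    {N : Subgroup G | N.Normal ∧ IsClosed (N : Set G) ∧ N.FiniteIndex ∧ N.index ≤ m} with h𝒩
  intro hbot
  -- the index type of relevant subgroups
  let ι := {N : Subgroup G // N ∈ 𝒩}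
  haveI hιne : Nonempty ι := by
    refine ⟨⟨⊤, ⟨fun n _ g => Subgroup.mem_top _⟩, by rw [Subgroup.coe_top]; exact isClosed_univ, inferInstance, ?_⟩⟩
    simp [Subgroup.index_top, hm]
  -- the "support" of an element
  let supp : G → Set ι := fun x => {N : ι | x ∉ N.1}
  -- supports of nontrivial elements are nonempty
  have hsupp_ne : ∀ x : G, x ≠ 1 → (supp x).Nonempty := by
    intro x hx
    by_contra hempty
    rw [Set.not_nonempty_iff_eq_empty] at hempty
    have hxmem : x ∈ (⨅ N ∈ 𝒩, N : Subgroup G) := by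
      rw [Subgroup.mem_iInf]
      intro N
      rw [Subgroup.mem_iInf]
      intro hN
      by_contra hxN
      have hmem : (⟨N, hN⟩ : ι) ∈ supp x := hxN
      rw [hempty] at hmem
      exact hmem
    rw [hbot] at hxmem
    exact hx (Subgroup.mem_bot.mp hxmem)
  -- the subgroup `W x`: intersection of all members of 𝒩 containing x
  let W : G → Subgroup G := fun x => ⨅ (N : ι) (_ : x ∈ N.1), N.1
  have hWmem : ∀ x : G, x ∈ W x := by
    intro x
    rw [Subgroup.mem_iInf]
    intro N
    rw [Subgroup.mem_iInf]
    exact fun h => h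
  have hWle : ∀ x : G, ∀ N : ι, x ∈ N.1 → W x ≤ N.1 := by
    intro x N hx
    exact iInf₂_le N hx
  have hWnormal : ∀ x : G, (W x).Normal := by
    intro x
    constructor
    intro a ha g
    rw [Subgroup.mem_iInf] at ha ⊢
    intro N
    have haN := ha N
    rw [Subgroup.mem_iInf] at haN ⊢
    intro hx
    exact (N.2.1).conj_mem a (haN hx) g
  have hWclosed : ∀ x : G, IsClosed ((W x : Subgroup G) : Set G) := by
    intro x
    have hcoe : ((W x : Subgroup G) : Set G) = ⋂ (N : ι), ⋂ (_ : x ∈ N.1), (N.1 : Set G) := by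
      simp only [W, Subgroup.coe_iInf]
    rw [hcoe]
    exact isClosed_iInter fun N => isClosed_iInter fun _ => N.2.2.1
  have hWfi : ∀ x : G, x ≠ 1 → (W x).FiniteIndex := by
    intro x hx
    refine hG.2 (W x) (hWnormal x) (hWclosed x) ?_
    intro hWbot
    exact hx (Subgroup.mem_bot.mp (hWbot ▸ hWmem x))
  -- directedness: supports form a filter base
  have hdir : ∀ x₁ x₂ : G, x₁ ≠ 1 → x₂ ≠ 1 →
      ∃ y : G, y ≠ 1 ∧ supp y ⊆ supp x₁ ∧ supp y ⊆ supp x₂ := by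
    intro x₁ x₂ h₁ h₂
    haveI := hWfi x₁ h₁
    haveI := hWfi x₂ h₂
    haveI : (W x₁ ⊓ W x₂).FiniteIndex := inferInstance
    haveI : Infinite (W x₁ ⊓ W x₂ : Subgroup G) :=
      aux_infinite_subgroup_of_finiteIndex (W x₁ ⊓ W x₂)
    haveI : Nontrivial (W x₁ ⊓ W x₂ : Subgroup G) := Infinite.instNontrivial _
    obtain ⟨y, hy⟩ := exists_ne (1 : (W x₁ ⊓ W x₂ : Subgroup G))
    have hy1 : (y : G) ≠ 1 := fun h => hy (Subtype.ext h)
    have hysub : ∀ x : G, (y : G) ∈ W x → supp (y : G) ⊆ supp x := by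
      intro x hyx N hN
      by_contra hxN
      rw [Set.mem_setOf_eq, not_not] at hxN
      exact hN (hWle x N hxN hyx)
    have hymem := y.2
    rw [Subgroup.mem_inf] at hymem
    exact ⟨y, hy1, hysub x₁ hymem.1, hysub x₂ hymem.2⟩
  -- build an ultrafilter containing all supports
  haveI : Nontrivial G := Infinite.instNontrivial G
  obtain ⟨x₀, hx₀⟩ := exists_ne (1 : G)
  haveI : Nonempty {x : G // x ≠ 1} := ⟨⟨x₀, hx₀⟩⟩
  let F : Filter ι := ⨅ x : {x : G // x ≠ 1}, Filter.principal (supp x.1)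
  haveI hFne : F.NeBot := by
    apply Filter.iInf_neBot_of_directed
    · intro a b
      obtain ⟨y, hy1, hys1, hys2⟩ := hdir a.1 b.1 a.2 b.2
      exact ⟨⟨y, hy1⟩, Filter.principal_mono.mpr hys1, Filter.principal_mono.mpr hys2⟩
    · intro x
      exact Filter.principal_neBot_iff.mpr (hsupp_ne x.1 x.2)
  let U : Ultrafilter ι := Ultrafilter.of F
  have hUsupp : ∀ x : G, x ≠ 1 → supp x ∈ U := by
    intro x hx
    have h1 : F ≤ Filter.principal (supp x) := iInf_le _ (⟨x, hx⟩ : {x : G // x ≠ 1})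
    exact (Ultrafilter.of_le F) (h1 (Filter.mem_principal_self _))
  -- pigeonhole: for each N, two of m+1 fixed elements agree mod N
  let emb : Fin (m + 1) ↪ G := Fin.valEmbedding.trans (Infinite.natEmbedding G)
  have hpigeon : ∀ N : ι, ∃ p : Fin (m + 1) × Fin (m + 1), p.1 ≠ p.2 ∧
      (QuotientGroup.mk (emb p.1) : G ⧸ N.1) = QuotientGroup.mk (emb p.2) := by
    intro N
    haveI : N.1.FiniteIndex := N.2.2.2.1
    haveI : Finite (G ⧸ N.1) := Subgroup.finite_quotient_of_finiteIndex (H := N.1)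
    haveI : Fintype (G ⧸ N.1) := Fintype.ofFinite _
    have hcardq : Fintype.card (G ⧸ N.1) = N.1.index := by
      rw [Subgroup.index_eq_card, Nat.card_eq_fintype_card]
    have hcard : Fintype.card (G ⧸ N.1) < Fintype.card (Fin (m + 1)) := by
      rw [Fintype.card_fin, hcardq]
      have := N.2.2.2.2
      omega
    obtain ⟨j, k, hjk, hjk2⟩ := Fintype.exists_ne_map_eq_of_card_lt
      (fun i : Fin (m + 1) => (QuotientGroup.mk (emb i) : G ⧸ N.1)) hcard
    exact ⟨(j, k), hjk, hjk2⟩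
  choose gp hgp1 hgp2 using hpigeon
  -- some fiber of gp is in the ultrafilter
  have hfiber : ∃ p, gp ⁻¹' {p} ∈ U := by
    by_contra hnone
    push_neg at hnone
    have hcompl : ∀ p, (gp ⁻¹' {p})ᶜ ∈ U := fun p =>
      (Ultrafilter.compl_mem_iff_notMem).mpr (hnone p)
    have hall : (⋂ p, (gp ⁻¹' {p})ᶜ) ∈ U := Filter.iInter_mem.mpr hcompl
    have hempty : (⋂ p, (gp ⁻¹' {p})ᶜ : Set ι) = ∅ := by
      ext N
      simp
    rw [hempty] at hall
    exact Ultrafilter.empty_notMem hall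
  obtain ⟨p, hp⟩ := hfiber
  obtain ⟨N₀, hN₀⟩ := Ultrafilter.nonempty_of_mem hp
  have hN₀' : gp N₀ = p := hN₀
  have hpne : p.1 ≠ p.2 := by
    have := hgp1 N₀
    rwa [hN₀'] at this
  set z : G := (emb p.1)⁻¹ * emb p.2 with hzdef
  have hzne : z ≠ 1 := by
    intro h
    exact hpne (emb.injective (inv_mul_eq_one.mp h))
  have hsub : gp ⁻¹' {p} ⊆ (supp z)ᶜ := by
    intro N hN
    simp only [Set.mem_preimage, Set.mem_singleton_iff] at hN
    have h2 := hgp2 N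
    rw [hN] at h2
    have hzN : z ∈ N.1 := QuotientGroup.eq.mp h2
    exact fun hNs => hNs hzN
  have h1 : (supp z)ᶜ ∈ U := Filter.mem_of_superset hp hsub
  have h2 := hUsupp z hzne
  exact (Ultrafilter.compl_notMem_iff.mpr h2) h1

end Aux

/-- A just infinite profinite group has only finitely many open subgroups of
any given index `n > 0`. -/
theorem finitely_many_open_subgroups_of_index (G : Type*) [Group G] [TopologicalSpace G]
    [IsTopologicalGroup G] [CompactSpace G] [T2Space G] [TotallyDisconnectedSpace G]
    (hG : JustInfinite G) (n : ℕ) (hn : 0 < n) :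
    {H : Subgroup G | IsOpen (H : Set G) ∧ H.index = n}.Finite := by
  haveI : Infinite G := hG.1
  set m := n.factorial with hmdef
  set 𝒩 : Set (Subgroup G) :=
    {N : Subgroup G | N.Normal ∧ IsClosed (N : Set G) ∧ N.FiniteIndex ∧ N.index ≤ m} with h𝒩
  have hD : (⨅ N ∈ 𝒩, N) ≠ ⊥ := aux_iInf_ne_bot hG m n.factorial_pos
  set D : Subgroup G := ⨅ N ∈ 𝒩, N with hDdef
  have hDnormal : D.Normal := by
    constructor
    intro a ha g
    rw [Subgroup.mem_iInf] at ha ⊢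
    intro N
    have haN := ha N
    rw [Subgroup.mem_iInf] at haN ⊢
    intro hN
    exact hN.1.conj_mem a (haN hN) g
  have hDclosed : IsClosed (D : Set G) := by
    have hcoe : (D : Set G) = ⋂ (N : Subgroup G), ⋂ (_ : N ∈ 𝒩), (N : Set G) := by
      simp only [D, Subgroup.coe_iInf]
    rw [hcoe]
    exact isClosed_iInter fun N => isClosed_iInter fun hN => hN.2.1
  haveI hDfi : D.FiniteIndex := hG.2 D hDnormal hDclosed hD
  haveI : Finite (G ⧸ D) := Subgroup.finite_quotient_of_finiteIndex (H := D)
  haveI : Finite (Subgroup (G ⧸ D)) :=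
    Finite.of_injective (fun K : Subgroup (G ⧸ D) => (K : Set (G ⧸ D))) SetLike.coe_injective
  apply Set.Finite.subset
    (Set.finite_range fun K : Subgroup (G ⧸ D) => Subgroup.comap (QuotientGroup.mk' D) K)
  rintro H ⟨hopen, hidx⟩
  haveI hHfi : H.FiniteIndex := ⟨by rw [hidx]; omega⟩
  -- the normal core of H belongs to 𝒩
  have hHclosed : IsClosed (H : Set G) := Subgroup.isClosed_of_isOpen H hopen
  have hcore_closed : IsClosed ((H.normalCore : Subgroup G) : Set G) := by
    have hcoe : ((H.normalCore : Subgroup G) : Set G) =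
        ⋂ b : G, (fun a => b * a * b⁻¹) ⁻¹' (H : Set G) := by
      ext a
      simp only [Set.mem_iInter, Set.mem_preimage, SetLike.mem_coe]
      exact ⟨fun h b => h b, fun h b => h b⟩
    rw [hcoe]
    exact isClosed_iInter fun b =>
      IsClosed.preimage ((continuous_const.mul continuous_id).mul continuous_const) hHclosed
  have hcore_index : H.normalCore.index ≤ m := by
    haveI : Finite (G ⧸ H) := Subgroup.finite_quotient_of_finiteIndex (H := H)
    letI : Fintype (G ⧸ H) := Fintype.ofFinite _
    letI := Classical.decEq (G ⧸ H)
    rw [Subgroup.normalCore_eq_ker, Subgroup.index_ker]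
    calc Nat.card (MulAction.toPermHom G (G ⧸ H)).range
        ≤ Nat.card (Equiv.Perm (G ⧸ H)) :=
          Nat.card_le_card_of_injective _ Subtype.coe_injective
      _ = (Fintype.card (G ⧸ H)).factorial := by
          rw [Nat.card_eq_fintype_card, Fintype.card_perm]
      _ = n.factorial := by
          congr 1
          rw [← Nat.card_eq_fintype_card, ← Subgroup.index_eq_card, hidx]
      _ = m := rfl
  have hcore_mem : H.normalCore ∈ 𝒩 :=
    ⟨Subgroup.normalCore_normal H, hcore_closed, H.finiteIndex_normalCore, hcore_index⟩
  have hDle : D ≤ H := le_trans (iInf₂_le H.normalCore hcore_mem) H.normalCore_le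
  refine ⟨Subgroup.map (QuotientGroup.mk' D) H, ?_⟩
  show Subgroup.comap (QuotientGroup.mk' D) (Subgroup.map (QuotientGroup.mk' D) H) = H
  rw [Subgroup.comap_map_eq, QuotientGroup.ker_mk']
  exact sup_of_le_left hDle
end

section
/- Let G be a just infinite profinite group, and let H be an infinite profinite group such that every finite continuous quotient of H is isomorphic to some finite continuous quotient of G. Then G and H are isomorphic as topological groups. -/
section Helpers

variable {G : Type*} [Group G] [TopologicalSpace G] [IsTopologicalGroup G]

/-- In a profinite group, every open neighborhood of 1 contains an open normal subgroup. -/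
lemma exists_openNormal_sub [CompactSpace G] [T2Space G] [TotallyDisconnectedSpace G]
    {U : Set G} (hU : IsOpen U) (h1 : 1 ∈ U) :
    ∃ N : Subgroup G, N.Normal ∧ IsOpen (N : Set G) ∧ (N : Set G) ⊆ U := by
  obtain ⟨V, hV, h1V, hVU⟩ := compact_exists_isClopen_in_isOpen hU h1
  obtain ⟨N, hN⟩ := IsTopologicalGroup.exist_openNormalSubgroup_sub_clopen_nhds_of_one hV h1V
  exact ⟨N.toOpenSubgroup.toSubgroup, N.isNormal', N.toOpenSubgroup.isOpen,
    fun x hx => hVU (hN hx)⟩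

/-- The main finiteness lemma: a just infinite topological group has only finitely many
open normal subgroups of any given index. -/
lemma finite_openNormal_index [CompactSpace G] (hG : JustInfinite G) (n : ℕ) :
    Finite {M : Subgroup G // M.Normal ∧ IsOpen (M : Set G) ∧ M.index = n} := by
  haveI : Infinite G := hG.1
  by_contra hfin
  rw [not_finite_iff_infinite] at hfin
  set ι := {M : Subgroup G // M.Normal ∧ IsOpen (M : Set G) ∧ M.index = n} with hι
  have hQfin : ∀ i : ι, Finite (G ⧸ i.1) := fun i =>
    Subgroup.quotient_finite_of_isOpen i.1 i.2.2.1
  -- a nonprincipal ultrafilter on ι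
  haveI : (Filter.cofinite : Filter ι).NeBot := Filter.cofinite_neBot
  set 𝒰 : Ultrafilter ι := Ultrafilter.of Filter.cofinite with h𝒰
  have hcof : ∀ s : Set ι, s ∈ 𝒰 → s.Infinite := by
    intro s hs
    by_contra hsfin
    rw [Set.not_infinite] at hsfin
    have hsc : sᶜ ∈ 𝒰 := Ultrafilter.of_le Filter.cofinite hsfin.compl_mem_cofinite
    have : (∅ : Set ι) ∈ 𝒰 := by
      have := Filter.inter_mem hs hsc
      rwa [Set.inter_compl_self] at this
    exact Filter.empty_notMem (𝒰 : Filter ι) this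
  -- the ultralimit subgroup B
  set B : Subgroup G :=
    { carrier := {g : G | {i : ι | g ∈ i.1} ∈ 𝒰}
      one_mem' := Filter.univ_mem' fun i => show (1:G) ∈ i.1 from one_mem _
      mul_mem' := fun {a b} ha hb => by
        filter_upwards [ha, hb] with i h1 h2 using mul_mem h1 h2
      inv_mem' := fun {a} ha => by
        filter_upwards [ha] with i h using inv_mem h } with hB
  -- pigeonhole: any n+1 elements have two in a common coset of B
  have pigeon : ∀ f : Fin (n + 1) → G, ∃ k l : Fin (n + 1), k ≠ l ∧ (f k)⁻¹ * f l ∈ B := by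
    intro f
    have hchoice : ∀ i : ι, ∃ p : Fin (n + 1) × Fin (n + 1),
        p.1 ≠ p.2 ∧ (f p.1)⁻¹ * f p.2 ∈ i.1 := by
      intro i
      haveI := hQfin i
      haveI := Fintype.ofFinite (G ⧸ i.1)
      have hcard : Fintype.card (G ⧸ i.1) < Fintype.card (Fin (n + 1)) := by
        rw [Fintype.card_fin, ← Nat.card_eq_fintype_card]
        have : Nat.card (G ⧸ i.1) = n := i.2.2.2
        rw [this]
        exact Nat.lt_succ_self n
      obtain ⟨k, l, hkl, he⟩ := Fintype.exists_ne_map_eq_of_card_lt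
        (fun k : Fin (n + 1) => (QuotientGroup.mk (f k) : G ⧸ i.1)) hcard
      refine ⟨⟨k, l⟩, hkl, ?_⟩
      rwa [QuotientGroup.eq] at he
    choose c hc using hchoice
    obtain ⟨p, hp⟩ := Ultrafilter.eq_pure_of_finite (𝒰.map c)
    have hmem : {i : ι | c i = p} ∈ 𝒰 := by
      have h1 : {p} ∈ 𝒰.map c := by rw [hp]; exact Filter.mem_pure.mpr rfl
      exact h1
    obtain ⟨i0, hi0⟩ := (hcof _ hmem).nonempty
    have hne : p.1 ≠ p.2 := by
      have h2 := hc i0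
      rw [hi0] at h2
      exact h2.1
    refine ⟨p.1, p.2, hne, ?_⟩
    show {i : ι | (f p.1)⁻¹ * f p.2 ∈ i.1} ∈ 𝒰
    filter_upwards [hmem] with i hi
    have h3 := hc i
    rw [hi] at h3
    exact h3.2
  -- a nontrivial element of B
  obtain ⟨k, l, hkl, hbB⟩ := pigeon ((Fin.valEmbedding.trans (Infinite.natEmbedding G)) : Fin (n+1) ↪ G)
  set femb := (Fin.valEmbedding.trans (Infinite.natEmbedding G) : Fin (n+1) ↪ G)
  set b : G := (femb k)⁻¹ * femb l with hbdef
  have hb1 : b ≠ 1 := fun h => hkl (femb.injective (inv_mul_eq_one.mp h))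
  set 𝒩 : Set ι := {i : ι | b ∈ i.1} with h𝒩
  have h𝒩mem : 𝒩 ∈ 𝒰 := hbB
  have hinf : 𝒩.Infinite := hcof _ h𝒩mem
  set K : Subgroup G := ⨅ i : 𝒩, (i : ι).1 with hK
  have hbK : b ∈ K := Subgroup.mem_iInf.mpr fun i => i.2
  have hKbot : K ≠ ⊥ := fun h => hb1 (by rwa [h, Subgroup.mem_bot] at hbK)
  have hKnormal : K.Normal := by
    constructor
    intro x hx g
    rw [Subgroup.mem_iInf] at hx ⊢
    exact fun i => (i : ι).2.1.conj_mem x (hx i) g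
  have hKclosed : IsClosed (K : Set G) := by
    have hco : (K : Set G) = ⋂ i : 𝒩, ((i : ι).1 : Set G) := by
      ext x
      simp only [SetLike.mem_coe, Set.mem_iInter, hK, Subgroup.mem_iInf]
    rw [hco]
    exact isClosed_iInter fun i => Subgroup.isClosed_of_isOpen _ (i : ι).2.2.1
  have hKfi : K.FiniteIndex := hG.2 K hKnormal hKclosed hKbot
  haveI : Finite (G ⧸ K) := by
    have h0 : K.index ≠ 0 := hKfi.index_ne_zero
    exact (Nat.card_ne_zero.mp h0).2
  haveI : Finite (Subgroup (G ⧸ K)) :=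
    Finite.of_injective (fun S : Subgroup (G ⧸ K) => (S : Set (G ⧸ K))) SetLike.coe_injective
  have hKle : ∀ i : 𝒩, K ≤ (i : ι).1 := fun i => iInf_le _ i
  have hinj : Function.Injective
      (fun i : 𝒩 => Subgroup.map (QuotientGroup.mk' K) (i : ι).1) := by
    intro i j h
    have hi := Subgroup.comap_map_eq (QuotientGroup.mk' K) (i : ι).1
    have hj := Subgroup.comap_map_eq (QuotientGroup.mk' K) (j : ι).1
    rw [QuotientGroup.ker_mk'] at hi hj
    have : (i : ι).1 = (j : ι).1 := by
      have hcongr := congrArg (Subgroup.comap (QuotientGroup.mk' K)) h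
      rw [hi, hj] at hcongr
      rwa [sup_of_le_left (hKle i), sup_of_le_left (hKle j)] at hcongr
    exact Subtype.ext (Subtype.ext this)
  haveI := hinf.to_subtype
  haveI := Finite.of_injective _ hinj
  exact not_finite ↥𝒩

end Helpers

section System

open CategoryTheory

variable (G : Type*) (H : Type*) [Group G] [TopologicalSpace G] [IsTopologicalGroup G]
  [Group H] [TopologicalSpace H] [IsTopologicalGroup H]

/-- The data at level `N`: continuous (open-kernel) surjections `G →* H ⧸ N`. -/
def Fobj (N : OpenNormalSubgroup H) : Type _ :=
  {φ : G →* H ⧸ (N : Subgroup H) // Function.Surjective φ ∧ IsOpen ((φ.ker : Subgroup G) : Set G)}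

variable {H} in
lemma toSub_le {N M : OpenNormalSubgroup H} (h : N ≤ M) :
    (N : Subgroup H) ≤ (M : Subgroup H) := fun _ hx => h hx

variable {H} in
/-- The natural projection `H ⧸ N →* H ⧸ M` for `N ≤ M`. -/
def natProj {N M : OpenNormalSubgroup H} (h : N ≤ M) :
    H ⧸ (N : Subgroup H) →* H ⧸ (M : Subgroup H) :=
  QuotientGroup.map _ _ (MonoidHom.id H)
    (by rw [Subgroup.comap_id]; exact toSub_le h)

variable {H} in
lemma natProj_mk {N M : OpenNormalSubgroup H} (h : N ≤ M) (x : H) :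
    natProj h (QuotientGroup.mk x) = QuotientGroup.mk x := rfl

variable {G H} in
/-- Transition map of the system. -/
def Fmap {N M : OpenNormalSubgroup H} (h : N ≤ M) (φ : Fobj G H N) : Fobj G H M := by
  refine ⟨(natProj h).comp φ.1, ?_, ?_⟩
  · intro y
    obtain ⟨x, rfl⟩ := QuotientGroup.mk_surjective y
    obtain ⟨g, hg⟩ := φ.2.1 (QuotientGroup.mk x)
    exact ⟨g, by rw [MonoidHom.comp_apply, hg, natProj_mk]⟩
  · refine Subgroup.isOpen_mono ?_ φ.2.2
    intro x hx
    rw [MonoidHom.mem_ker] at hx ⊢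
    rw [MonoidHom.comp_apply, hx, map_one]

variable {G H} in
lemma Fmap_self {N : OpenNormalSubgroup H} (h : N ≤ N) (φ : Fobj G H N) : Fmap h φ = φ := by
  apply Subtype.ext
  apply MonoidHom.ext
  intro x
  show (natProj h).comp φ.1 x = φ.1 x
  obtain ⟨y, hy⟩ := QuotientGroup.mk_surjective (φ.1 x)
  rw [MonoidHom.comp_apply, ← hy, natProj_mk]

variable {G H} in
lemma Fmap_comp' {N M P : OpenNormalSubgroup H} (h1 : N ≤ M) (h2 : M ≤ P) (h : N ≤ P)
    (φ : Fobj G H N) : Fmap h φ = Fmap h2 (Fmap h1 φ) := by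
  apply Subtype.ext
  apply MonoidHom.ext
  intro x
  show (natProj h).comp φ.1 x = (natProj h2).comp ((natProj h1).comp φ.1) x
  obtain ⟨y, hy⟩ := QuotientGroup.mk_surjective (φ.1 x)
  simp only [MonoidHom.comp_apply, ← hy, natProj_mk]

/-- The inverse system of finite-level data, indexed by open normal subgroups of `H`
under reverse inclusion. -/
def Fsys : ((OpenNormalSubgroup H)ᵒᵈ)ᵒᵖ ⥤ Type _ where
  obj N := Fobj G H (OrderDual.ofDual N.unop)
  map {X Y} f := TypeCat.ofHom fun φ => Fmap (leOfHom f.unop) φ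
  map_id X := by ext : 2; funext φ; exact Fmap_self _ φ
  map_comp {X Y Z} f g := by ext : 2; funext φ; exact Fmap_comp' (leOfHom f.unop) (leOfHom g.unop) _ φ

instance : IsDirected ((OpenNormalSubgroup H)ᵒᵈ) (· ≤ ·) :=
  ⟨fun a b => ⟨OrderDual.toDual (OrderDual.ofDual a ⊓ OrderDual.ofDual b),
    inf_le_left (b := OrderDual.ofDual b), inf_le_right (a := OrderDual.ofDual a)⟩⟩

end System

section Levels

variable {G : Type*} {H : Type*} [Group G] [TopologicalSpace G] [IsTopologicalGroup G]
  [Group H] [TopologicalSpace H] [IsTopologicalGroup H]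

lemma Fobj.finite [CompactSpace G] [CompactSpace H] (hG : JustInfinite G)
    (N : OpenNormalSubgroup H) : Finite (Fobj G H N) := by
  haveI hQfin : Finite (H ⧸ (N : Subgroup H)) :=
    Subgroup.quotient_finite_of_isOpen _ N.toOpenSubgroup.isOpen
  set n := Nat.card (H ⧸ (N : Subgroup H)) with hn
  have hn0 : n ≠ 0 := Nat.card_ne_zero.mpr ⟨inferInstance, inferInstance⟩
  haveI : Finite {M : Subgroup G // M.Normal ∧ IsOpen (M : Set G) ∧ M.index = n} :=
    finite_openNormal_index hG n
  have hker : ∀ φ : Fobj G H N, (φ.1.ker.Normal ∧ IsOpen ((φ.1.ker : Subgroup G) : Set G)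
      ∧ φ.1.ker.index = n) := by
    intro φ
    refine ⟨MonoidHom.normal_ker φ.1, φ.2.2, ?_⟩
    rw [Subgroup.index_ker, MonoidHom.range_eq_top.mpr φ.2.1]
    exact Nat.card_congr Subgroup.topEquiv.toEquiv
  haveI hMfin : ∀ M : {M : Subgroup G // M.Normal ∧ IsOpen (M : Set G) ∧ M.index = n},
      Finite (G ⧸ M.1) := by
    intro M
    have h0 : M.1.index ≠ 0 := by rw [M.2.2.2]; exact hn0
    exact (Nat.card_ne_zero.mp h0).2
  haveI : Finite (Σ M : {M : Subgroup G // M.Normal ∧ IsOpen (M : Set G) ∧ M.index = n},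
      (G ⧸ M.1 → H ⧸ (N : Subgroup H))) := inferInstance
  have key : ∀ (M₂ : {M : Subgroup G // M.Normal ∧ IsOpen (M : Set G) ∧ M.index = n})
      (f₂ : G ⧸ M₂.1 → H ⧸ (N : Subgroup H)) (φ : Fobj G H N),
      (⟨⟨φ.1.ker, hker φ⟩, fun x => QuotientGroup.kerLift φ.1 x⟩ :
        Σ M : {M : Subgroup G // M.Normal ∧ IsOpen (M : Set G) ∧ M.index = n},
          (G ⧸ M.1 → H ⧸ (N : Subgroup H))) = ⟨M₂, f₂⟩ →
      ∀ x : G, φ.1 x = f₂ (QuotientGroup.mk x) := by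
    intro M₂ f₂ φ h x
    obtain ⟨M₂v, hM₂⟩ := M₂
    rw [Sigma.ext_iff] at h
    obtain ⟨hfst, hsnd⟩ := h
    have hker' : φ.1.ker = M₂v := congrArg Subtype.val hfst
    subst hker'
    have he : (fun x => QuotientGroup.kerLift φ.1 x) = f₂ := eq_of_heq hsnd
    rw [← he]
    exact (QuotientGroup.kerLift_mk φ.1 x).symm
  apply Finite.of_injective (fun φ : Fobj G H N =>
    (⟨⟨φ.1.ker, hker φ⟩, fun x => QuotientGroup.kerLift φ.1 x⟩ :
        Σ M : {M : Subgroup G // M.Normal ∧ IsOpen (M : Set G) ∧ M.index = n},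
          (G ⧸ M.1 → H ⧸ (N : Subgroup H))))
  intro φ ψ h
  apply Subtype.ext
  apply MonoidHom.ext
  intro x
  have h1 := key _ _ φ h x
  have h2 := key _ _ ψ rfl x
  rw [h1, h2]

lemma Fobj.nonempty
    (hquot : ∀ N : Subgroup H, ∀ _hN : N.Normal, IsOpen (N : Set H) →
      ∃ M : Subgroup G, ∃ _hM : M.Normal, IsOpen (M : Set G) ∧
        Nonempty ((H ⧸ N) ≃* (G ⧸ M)))
    (N : OpenNormalSubgroup H) : Nonempty (Fobj G H N) := by
  obtain ⟨M, hM, hMopen, ⟨e⟩⟩ := hquot (N : Subgroup H) N.isNormal' N.toOpenSubgroup.isOpen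
  refine ⟨⟨(e.symm.toMonoidHom).comp (QuotientGroup.mk' M), ?_, ?_⟩⟩
  · exact e.symm.surjective.comp (QuotientGroup.mk'_surjective M)
  · have hk : ((e.symm.toMonoidHom).comp (QuotientGroup.mk' M)).ker = M := by
      ext x
      rw [MonoidHom.mem_ker, MonoidHom.comp_apply]
      rw [show (QuotientGroup.mk' M) x = QuotientGroup.mk x from rfl]
      rw [MulEquiv.coe_toMonoidHom, EmbeddingLike.map_eq_one_iff]
      exact QuotientGroup.eq_one_iff x
    rw [hk]
    exact hMopen
end Levels

open CategoryTheory Opposite OrderDual in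
/-- If `G` is a just infinite profinite group and `H` is an infinite profinite group
such that every finite continuous quotient of `H` (i.e. quotient by an open normal
subgroup) is isomorphic to some finite continuous quotient of `G`, then `G ≅ H` as
topological groups. -/
theorem iso_of_finite_quotients (G H : Type*) [Group G] [TopologicalSpace G]
    [IsTopologicalGroup G] [CompactSpace G] [T2Space G] [TotallyDisconnectedSpace G]
    [Group H] [TopologicalSpace H] [IsTopologicalGroup H] [CompactSpace H] [T2Space H]
    [TotallyDisconnectedSpace H] [Infinite H]
    (hG : JustInfinite G)
    (hquot : ∀ N : Subgroup H, ∀ _hN : N.Normal, IsOpen (N : Set H) →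
      ∃ M : Subgroup G, ∃ _hM : M.Normal, IsOpen (M : Set G) ∧
        Nonempty ((H ⧸ N) ≃* (G ⧸ M))) :
    ∃ e : G ≃* H, Continuous ⇑e ∧ Continuous ⇑e.symm := by
  classical
  haveI hNE : Nonempty (OpenNormalSubgroup H) :=
    ⟨{ toOpenSubgroup := ⊤, isNormal' := ⟨fun n _ g => Subgroup.mem_top _⟩ }⟩
  haveI : ∀ j : ((OpenNormalSubgroup H)ᵒᵈ)ᵒᵖ, Finite ((Fsys G H).obj j) :=
    fun j => Fobj.finite hG (OrderDual.ofDual j.unop)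
  haveI : ∀ j : ((OpenNormalSubgroup H)ᵒᵈ)ᵒᵖ, Nonempty ((Fsys G H).obj j) :=
    fun j => Fobj.nonempty hquot (OrderDual.ofDual j.unop)
  obtain ⟨u, hu⟩ := nonempty_sections_of_finite_inverse_system (Fsys G H)
  -- compatibility of the section
  have hcompat : ∀ (N M : OpenNormalSubgroup H) (h : N ≤ M) (x : G),
      natProj h ((u (op (toDual N))).1 x) = (u (op (toDual M))).1 x := by
    intro N M h x
    exact congrArg (fun ψ : Fobj G H M => ψ.1 x)
      (hu ((homOfLE (show toDual M ≤ toDual N from h)).op))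
  -- basis of open normal subgroups at 1 in H
  have hbasis : ∀ U : Set H, IsOpen U → (1 : H) ∈ U →
      ∃ N : OpenNormalSubgroup H, ((N : Subgroup H) : Set H) ⊆ U := by
    intro U hU h1
    obtain ⟨N, hn, ho, hsub⟩ := exists_openNormal_sub hU h1
    exact ⟨{ toOpenSubgroup := ⟨N, ho⟩, isNormal' := hn }, hsub⟩
  have hsep : ∀ z : H, (∀ N : OpenNormalSubgroup H, z ∈ (N : Subgroup H)) → z = 1 := by
    intro z hz
    by_contra hz1
    obtain ⟨N, hN⟩ := hbasis {z}ᶜ (isOpen_compl_singleton)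
      (by simpa using (Ne.symm hz1))
    exact hN (hz N) rfl
  -- the limit point construction
  have key : ∀ g : G, ∃ h : H, ∀ N : OpenNormalSubgroup H,
      (QuotientGroup.mk h : H ⧸ (N : Subgroup H)) = (u (op (toDual N))).1 g := by
    intro g
    set Z : OpenNormalSubgroup H → Set H := fun N =>
      {h : H | (QuotientGroup.mk h : H ⧸ (N : Subgroup H)) = (u (op (toDual N))).1 g}
      with hZ
    have hne : ∀ N, (Z N).Nonempty := by
      intro N
      obtain ⟨h, hh⟩ := QuotientGroup.mk_surjective ((u (op (toDual N))).1 g)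
      exact ⟨h, hh⟩
    have hclosed : ∀ N, IsClosed (Z N) := by
      intro N
      obtain ⟨h₀, hh₀⟩ := QuotientGroup.mk_surjective ((u (op (toDual N))).1 g)
      have hZN : Z N = (fun h => h₀⁻¹ * h) ⁻¹' (((N : Subgroup H) : Set H)) := by
        ext h
        simp only [hZ, Set.mem_setOf_eq, Set.mem_preimage, SetLike.mem_coe, ← hh₀]
        exact ⟨fun he => QuotientGroup.eq.mp he.symm, fun he => (QuotientGroup.eq.mpr he).symm⟩
      rw [hZN]
      exact (Subgroup.isClosed_of_isOpen _ N.toOpenSubgroup.isOpen).preimage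
        (continuous_const.mul continuous_id)
    have hdir : Directed (· ⊇ ·) Z := by
      intro N M
      refine ⟨N ⊓ M, ?_, ?_⟩
      · intro h hh
        have h2 := congrArg (natProj (inf_le_left : N ⊓ M ≤ N)) hh
        rwa [natProj_mk, hcompat _ _ _ g] at h2
      · intro h hh
        have h2 := congrArg (natProj (inf_le_right : N ⊓ M ≤ M)) hh
        rwa [natProj_mk, hcompat _ _ _ g] at h2
    obtain ⟨h, hh⟩ := IsCompact.nonempty_iInter_of_directed_nonempty_isCompact_isClosed
      Z hdir hne (fun N => (hclosed N).isCompact) hclosed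
    rw [Set.mem_iInter] at hh
    exact ⟨h, fun N => hh N⟩
  choose f hf using key
  -- uniqueness/separation helper
  have heq : ∀ (h h' : H),
      (∀ N : OpenNormalSubgroup H,
        (QuotientGroup.mk h : H ⧸ (N : Subgroup H)) = QuotientGroup.mk h') → h = h' := by
    intro h h' hhh
    exact inv_mul_eq_one.mp (hsep _ (fun N => QuotientGroup.eq.mp (hhh N)))
  -- `f` is a group homomorphism
  have hf1 : f 1 = 1 := by
    apply heq
    intro N
    rw [hf 1 N, map_one]
    rfl
  have hfmul : ∀ a b : G, f (a * b) = f a * f b := by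
    intro a b
    apply heq
    intro N
    rw [hf (a * b) N, map_mul]
    rw [QuotientGroup.mk_mul]
    rw [hf a N, hf b N]
    rfl
  set F : G →* H := { toFun := f, map_one' := hf1, map_mul' := hfmul } with hF
  -- continuity
  have hcont : Continuous f := by
    rw [continuous_def]
    intro U hU
    rw [isOpen_iff_forall_mem_open]
    intro g hg
    have h1 : IsOpen ((fun z => f g * z) ⁻¹' U) := hU.preimage (continuous_const.mul continuous_id)
    have h2 : (1 : H) ∈ (fun z => f g * z) ⁻¹' U := by
      simpa using hg
    obtain ⟨N, hN⟩ := hbasis _ h1 h2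
    refine ⟨(fun x => g⁻¹ * x) ⁻¹' (((u (op (toDual N))).1.ker : Subgroup G) : Set G),
      ?_, ?_, ?_⟩
    · intro x hx
      have hx' : (u (op (toDual N))).1 (g⁻¹ * x) = 1 := hx
      rw [map_mul, map_inv, inv_mul_eq_one] at hx'
      have hmk : (QuotientGroup.mk (f g) : H ⧸ (N : Subgroup H)) = QuotientGroup.mk (f x) := by
        rw [hf g N, hf x N]
        exact hx'
      have hmem : (f g)⁻¹ * f x ∈ (N : Subgroup H) := QuotientGroup.eq.mp hmk
      have := hN hmem
      simpa [Set.mem_preimage, mul_inv_cancel_left] using this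
    · exact ((u (op (toDual N))).2.2).preimage (continuous_const.mul continuous_id)
    · show g⁻¹ * g ∈ (u (op (toDual N))).1.ker
      rw [inv_mul_cancel]
      exact one_mem _
  -- surjectivity
  have hsurj : Function.Surjective f := by
    intro h
    by_contra hh
    push_neg at hh
    have hrange : IsClosed (Set.range f) := (isCompact_range hcont).isClosed
    have hopen : IsOpen ((fun z => h * z) ⁻¹' (Set.range f)ᶜ) :=
      hrange.isOpen_compl.preimage (continuous_const.mul continuous_id)
    have h1mem : (1 : H) ∈ (fun z => h * z) ⁻¹' (Set.range f)ᶜ := by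
      simp only [Set.mem_preimage, mul_one, Set.mem_compl_iff, Set.mem_range]
      exact fun ⟨g, hg⟩ => hh g hg
    obtain ⟨N, hN⟩ := hbasis _ hopen h1mem
    obtain ⟨g, hg⟩ := (u (op (toDual N))).2.1 (QuotientGroup.mk h)
    have hmem : h⁻¹ * f g ∈ (N : Subgroup H) := by
      apply QuotientGroup.eq.mp
      show (QuotientGroup.mk h : H ⧸ (N : Subgroup H)) = QuotientGroup.mk (f g)
      rw [hf g N, hg]
      rfl
    have := hN hmem
    rw [Set.mem_preimage, mul_inv_cancel_left] at this
    exact this ⟨g, rfl⟩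
  -- injectivity
  have hinj : Function.Injective f := by
    have : Function.Injective F := by
      rw [← MonoidHom.ker_eq_bot_iff]
      by_contra hne
      have hclosedker : IsClosed ((F.ker : Subgroup G) : Set G) := by
        have : ((F.ker : Subgroup G) : Set G) = f ⁻¹' {1} := by
          ext x
          simp [hF, MonoidHom.mem_ker]
        rw [this]
        exact IsClosed.preimage hcont isClosed_singleton
      have hfi := hG.2 F.ker (MonoidHom.normal_ker F) hclosedker hne
      haveI : Finite (G ⧸ F.ker) := (Nat.card_ne_zero.mp hfi.index_ne_zero).2
      haveI : Finite H := Finite.of_equiv _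
        (QuotientGroup.quotientKerEquivOfSurjective F hsurj).toEquiv
      exact not_finite H
    exact this
  -- assemble the isomorphism
  let e : G ≃* H := MulEquiv.ofBijective F ⟨hinj, hsurj⟩
  have hce : Continuous ⇑e := hcont
  have hsymm : Continuous ⇑e.symm := by
    rw [continuous_def]
    intro U hU
    have h1 : ⇑e.symm ⁻¹' U = ⇑e '' U := by
      ext y
      constructor
      · intro hy
        exact ⟨e.symm y, hy, by simp⟩
      · rintro ⟨x, hx, rfl⟩
        simpa using hx
    have h2 : ⇑e '' U = (⇑e '' Uᶜ)ᶜ := by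
      ext y
      constructor
      · rintro ⟨x, hx, rfl⟩ ⟨x', hx', hxx'⟩
        exact hx' (hinj hxx' ▸ hx)
      · intro hy
        obtain ⟨x, rfl⟩ := hsurj y
        exact ⟨x, by_contra fun hx => hy ⟨x, hx, rfl⟩, rfl⟩
    have h3 : IsClosed (⇑e '' Uᶜ) :=
      ((hU.isClosed_compl).isCompact.image hce).isClosed
    rw [h1, h2]
    exact h3.isOpen_compl
  exact ⟨e, hce, hsymm⟩
end

section
/- Let G be a profinite group. Then G is finite or just infinite if and only if OI_n(G) has finite index in G for every positive integer n (equivalently, if and only if there is a function η : ℕ → ℕ with ob_G(n) ≤ η(n) for all n). -/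
open Pointwise


/-- The oblique core `Ob_G(H) = H ∩ ⋂ {K ⊴_o G ∣ K ≰ H}`. -/
def obliqueCore {G : Type*} [Group G] [TopologicalSpace G] (H : Subgroup G) : Subgroup G :=
  H ⊓ ⨅ (K : Subgroup G) (_ : K.Normal ∧ IsOpen (K : Set G) ∧ ¬ K ≤ H), K

/-- `I⊲_n(G)`: the intersection of all open normal subgroups of `G` of index at
most `n`. -/
def normalIndexCap (G : Type*) [Group G] [TopologicalSpace G] (n : ℕ) : Subgroup G :=
  ⨅ (K : Subgroup G) (_ : K.Normal ∧ IsOpen (K : Set G) ∧ K.index ≤ n), K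

/-- `OI_n(G) = Ob_G(I⊲_n(G))`. -/
def OI (G : Type*) [Group G] [TopologicalSpace G] (n : ℕ) : Subgroup G :=
  obliqueCore (normalIndexCap G n)

/-- The generalised obliquity function `ob_G(n) = |G : OI_n(G)|`, with values in
`Cardinal` so that infinite index is recorded faithfully. -/
noncomputable def obFun (G : Type*) [Group G] [TopologicalSpace G] (n : ℕ) : Cardinal :=
  Cardinal.mk (G ⧸ OI G n)

section Auxiliary

variable {G : Type*} [Group G]

/-- Purely group-theoretic: finite index passes up. -/
lemma JI.finiteIndex_mono {H K : Subgroup G} (h : H ≤ K) (hH : H.FiniteIndex) :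
    K.FiniteIndex := by
  refine ⟨fun h0 => hH.index_ne_zero ?_⟩
  have := Subgroup.index_dvd_of_le h
  rw [h0] at this
  exact zero_dvd_iff.mp this

/-- Strict inclusion of finite-index subgroups strictly increases the index. -/
lemma JI.index_lt_of_lt {H K : Subgroup G} (h : H < K) (hH : H.FiniteIndex) :
    K.index < H.index := by
  have hle : H ≤ K := le_of_lt h
  have hrel := Subgroup.relIndex_mul_index hle
  have hHne : H.index ≠ 0 := hH.index_ne_zero
  have hKne : K.index ≠ 0 := (JI.finiteIndex_mono hle hH).index_ne_zero
  have hrne : H.relIndex K ≠ 0 := by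
    intro h0; rw [h0, zero_mul] at hrel; exact hHne hrel.symm
  have hrone : H.relIndex K ≠ 1 := by
    intro h1
    exact h.ne (le_antisymm hle (Subgroup.relIndex_eq_one.mp h1))
  have h2 : 2 ≤ H.relIndex K := by omega
  calc K.index < 2 * K.index := by omega
    _ ≤ H.relIndex K * K.index := Nat.mul_le_mul_right _ h2
    _ = H.index := hrel

lemma JI.eq_of_le_of_index_le {H K : Subgroup G} (h : H ≤ K) (hH : H.FiniteIndex)
    (hi : H.index ≤ K.index) : H = K := by
  by_contra hne
  exact absurd hi (not_le.mpr (JI.index_lt_of_lt (lt_of_le_of_ne h hne) hH))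

variable [TopologicalSpace G] [IsTopologicalGroup G] [CompactSpace G]

lemma JI.finiteIndex_of_isOpen {H : Subgroup G} (h : IsOpen (H : Set G)) : H.FiniteIndex :=
  haveI : Finite (G ⧸ H) := Subgroup.quotient_finite_of_isOpen H h
  Subgroup.finiteIndex_of_finite_quotient

variable [T2Space G] [TotallyDisconnectedSpace G]

/-- Open normal subgroups form a neighbourhood basis of `1` in a profinite group. -/
lemma JI.exists_openNormal_subset {V : Set G} (hV : IsOpen V) (h1 : (1 : G) ∈ V) :
    ∃ U : Subgroup G, U.Normal ∧ IsOpen (U : Set G) ∧ (U : Set G) ⊆ V := by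
  obtain ⟨W, hW, h1W, hWV⟩ := compact_exists_isClopen_in_isOpen hV h1
  obtain ⟨H, hH⟩ := IsTopologicalGroup.exist_openNormalSubgroup_sub_clopen_nhds_of_one hW h1W
  exact ⟨H.toOpenSubgroup.toSubgroup, H.isNormal', H.toOpenSubgroup.isOpen,
    fun x hx => hWV (hH hx)⟩

/-- If `x` belongs to `N ⊔ U` for every open normal `U`, and `N` is closed,
then `x ∈ N`. -/
lemma JI.mem_of_forall_mem_sup {N : Subgroup G} (hN : IsClosed (N : Set G)) {x : G}
    (h : ∀ U : Subgroup G, U.Normal → IsOpen (U : Set G) → x ∈ N ⊔ U) : x ∈ N := by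
  have hx : x ∈ closure (N : Set G) := by
    rw [mem_closure_iff]
    intro o ho hxo
    have hD : IsOpen ((fun u : G => x * u) ⁻¹' o) := ho.preimage (continuous_mul_left x)
    have h1D : (1 : G) ∈ (fun u : G => x * u) ⁻¹' o := by simpa using hxo
    obtain ⟨U, hUn, hUo, hUD⟩ := JI.exists_openNormal_subset hD h1D
    haveI := hUn
    have hmem : x ∈ (N : Set G) * (U : Set G) := by
      rw [← Subgroup.mul_normal N U]
      exact h U hUn hUo
    obtain ⟨a, ha, u, hu, hx'⟩ := Set.mem_mul.mp hmem
    refine ⟨a, ?_, ha⟩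
    have : a = x * u⁻¹ := by rw [← hx']; group
    rw [this]
    exact hUD (U.inv_mem hu)
  rwa [hN.closure_eq] at hx

lemma JI.le_of_forall_le_sup {N X : Subgroup G} (hN : IsClosed (N : Set G))
    (h : ∀ U : Subgroup G, U.Normal → IsOpen (U : Set G) → X ≤ N ⊔ U) : X ≤ N :=
  fun x hx => JI.mem_of_forall_mem_sup hN (fun U hn ho => h U hn ho hx)

/-- The closed normal closure of a point. -/
def Sc (y : G) : Subgroup G := (Subgroup.normalClosure {y}).topologicalClosure

lemma Sc_normal (y : G) : (Sc y).Normal :=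
  Subgroup.is_normal_topologicalClosure _

lemma Sc_isClosed (y : G) : IsClosed ((Sc y : Subgroup G) : Set G) :=
  Subgroup.isClosed_topologicalClosure _

lemma mem_Sc (y : G) : y ∈ Sc y :=
  Subgroup.le_topologicalClosure _
    (Subgroup.subset_normalClosure (Set.mem_singleton y))

lemma Sc_le {K : Subgroup G} (hn : K.Normal) (hc : IsClosed (K : Set G)) {y : G}
    (hy : y ∈ K) : Sc y ≤ K := by
  haveI := hn
  exact Subgroup.topologicalClosure_minimal _
    (Subgroup.normalClosure_le_normal (by simpa using hy)) hc

lemma Sc_finiteIndex (hJI : JustInfinite G) {y : G} (hy : y ≠ 1) :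
    (Sc y).FiniteIndex := by
  refine hJI.2 _ (Sc_normal y) (Sc_isClosed y) ?_
  intro hbot
  exact hy (by simpa [hbot] using (Subgroup.eq_bot_iff_forall _).mp hbot y (mem_Sc y))

lemma Sc_isOpen (hJI : JustInfinite G) {y : G} (hy : y ≠ 1) :
    IsOpen ((Sc y : Subgroup G) : Set G) :=
  haveI := Sc_finiteIndex hJI hy
  Subgroup.isOpen_of_isClosed_of_finiteIndex _ (Sc_isClosed y)

/-- Uniform continuity of `Sc`: if `x` lies in the coset `y • U` then
`Sc x ≤ Sc y ⊔ U`. -/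
lemma Sc_le_sup_of_near {x y : G} {U : Subgroup G} (hUn : U.Normal)
    (hUo : IsOpen (U : Set G)) (h : y⁻¹ * x ∈ U) : Sc x ≤ Sc y ⊔ U := by
  haveI := Sc_normal y
  haveI := hUn
  have hnormal : (Sc y ⊔ U).Normal := Subgroup.sup_normal _ _
  have hopen : IsOpen ((Sc y ⊔ U : Subgroup G) : Set G) :=
    Subgroup.isOpen_mono le_sup_right hUo
  have hclosed : IsClosed ((Sc y ⊔ U : Subgroup G) : Set G) :=
    Subgroup.isClosed_of_isOpen _ hopen
  refine Sc_le hnormal hclosed ?_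
  have hx : x = y * (y⁻¹ * x) := by group
  rw [hx]
  exact Subgroup.mul_mem _ (Subgroup.mem_sup_left (mem_Sc y)) (Subgroup.mem_sup_right h)

end Auxiliary

section Machine

variable {G : Type*} [Group G] [TopologicalSpace G] [IsTopologicalGroup G] [CompactSpace G]
  [T2Space G] [TotallyDisconnectedSpace G]

/-- Minimality predicate used in the machine. -/
def JIMini (C : Set G) (M : Subgroup G) : Prop :=
  (∃ y ∈ C, Sc y = M) ∧ ∀ z ∈ C, Sc z ≤ M → Sc z = M

/-- Step (ii): below every `Sc y₀` (with `y₀ ∈ C`) there is a minimal member. -/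
lemma JI.exists_mini (hJI : JustInfinite G) {C : Set G} (hC : IsClopen C)
    (h1 : (1 : G) ∉ C) {y₀ : G} (hy₀ : y₀ ∈ C) :
    ∃ M, JIMini C M ∧ M ≤ Sc y₀ := by
  by_contra hcon
  push_neg at hcon
  -- descent property
  have hdesc : ∀ z ∈ C, Sc z ≤ Sc y₀ → ∃ z' ∈ C, Sc z' < Sc z := by
    intro z hz hle
    by_contra h2
    push_neg at h2
    have hmini : JIMini C (Sc z) := by
      refine ⟨⟨z, hz, rfl⟩, fun w hw hwle => ?_⟩
      exact (lt_or_eq_of_le hwle).resolve_left (h2 w hw)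
    exact hcon _ hmini hle
  choose! f hfC hflt using hdesc
  -- build a strictly descending sequence
  let g : ℕ → G := fun k => Nat.rec y₀ (fun _ w => f w) k
  have hg0 : g 0 = y₀ := rfl
  have hgsucc : ∀ k, g (k + 1) = f (g k) := fun k => rfl
  have key : ∀ k, g k ∈ C ∧ Sc (g k) ≤ Sc y₀ := by
    intro k
    induction k with
    | zero => exact ⟨hy₀, le_rfl⟩
    | succ k ih =>
      have hlt := hflt (g k) ih.1 ih.2
      have hC' := hfC (g k) ih.1 ih.2
      exact ⟨by rw [hgsucc]; exact hC', by rw [hgsucc]; exact (le_of_lt hlt).trans ih.2⟩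
  have glt : ∀ k, Sc (g (k + 1)) < Sc (g k) := by
    intro k
    rw [hgsucc]
    exact hflt (g k) (key k).1 (key k).2
  have gmono : ∀ d k, Sc (g (k + d)) ≤ Sc (g k) := by
    intro d
    induction d with
    | zero => intro k; exact le_rfl
    | succ d ih =>
      intro k
      have h1 : Sc (g (k + d + 1)) ≤ Sc (g (k + d)) := le_of_lt (glt (k + d))
      have h2 := ih k
      have h3 : k + (d + 1) = k + d + 1 := rfl
      rw [h3]
      exact h1.trans h2
  -- cluster point of the sequence
  let t : ℕ → Set G := fun k => closure (g '' Set.Ici k)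
  have htsub : ∀ k, t (k + 1) ⊆ t k := by
    intro k
    exact closure_mono (Set.image_mono (Set.Ici_subset_Ici.mpr (Nat.le_succ k)))
  have htne : ∀ k, (t k).Nonempty := fun k =>
    ⟨g k, subset_closure ⟨k, Set.self_mem_Ici, rfl⟩⟩
  have htcl : ∀ k, IsClosed (t k) := fun k => isClosed_closure
  have ht0 : IsCompact (t 0) := (htcl 0).isCompact
  obtain ⟨x, hx⟩ := IsCompact.nonempty_iInter_of_sequence_nonempty_isCompact_isClosed
    t htsub htne ht0 htcl
  have hxk : ∀ k, x ∈ t k := fun k => Set.mem_iInter.mp hx k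
  have hxC : x ∈ C := by
    have : t 0 ⊆ C := closure_minimal (by rintro _ ⟨j, _, rfl⟩; exact (key j).1) hC.isClosed
    exact this (hxk 0)
  have hxne : x ≠ 1 := fun h => h1 (h ▸ hxC)
  -- Sc x is below every Sc (g k)
  have hxle : ∀ k, Sc x ≤ Sc (g k) := by
    intro k
    refine JI.le_of_forall_le_sup (Sc_isClosed _) ?_
    intro U hUn hUo
    have hO : IsOpen ((fun w : G => w⁻¹ * x) ⁻¹' (U : Set G)) :=
      hUo.preimage ((continuous_inv.mul continuous_const))
    have hxO : x ∈ (fun w : G => w⁻¹ * x) ⁻¹' (U : Set G) := by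
      simpa using U.one_mem
    obtain ⟨w, hwO, hwS⟩ := mem_closure_iff.mp (hxk k) _ hO hxO
    obtain ⟨j, hjk, rfl⟩ := hwS
    have hnear : (g j)⁻¹ * x ∈ U := hwO
    have h1 : Sc x ≤ Sc (g j) ⊔ U := Sc_le_sup_of_near hUn hUo hnear
    have h2 : Sc (g j) ≤ Sc (g k) := by
      have := gmono (j - k) k
      rwa [Nat.add_sub_cancel' hjk] at this
    exact h1.trans (sup_le_sup_right h2 U)
  -- index contradiction
  have hfin : ∀ k, (Sc (g k)).FiniteIndex := fun k =>
    Sc_finiteIndex hJI (fun h => h1 (h ▸ (key k).1))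
  have hxfin : (Sc x).FiniteIndex := Sc_finiteIndex hJI hxne
  have hdvd : ∀ k, (Sc (g k)).index ∣ (Sc x).index := fun k =>
    Subgroup.index_dvd_of_le (hxle k)
  have hbound : ∀ k, (Sc (g k)).index ≤ (Sc x).index := fun k =>
    Nat.le_of_dvd (Nat.pos_of_ne_zero hxfin.index_ne_zero) (hdvd k)
  have hstrict : StrictMono (fun k => (Sc (g k)).index) :=
    strictMono_nat_of_lt_succ (fun k => JI.index_lt_of_lt (glt k) (hfin (k + 1)))
  have h9 : (Sc x).index + 1 ≤ (Sc (g ((Sc x).index + 1))).index := hstrict.le_apply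
  have := hbound ((Sc x).index + 1)
  omega

/-- Step (iii): there are only finitely many minimal members. -/
lemma JI.mini_finite (hJI : JustInfinite G) {C : Set G} (hC : IsClopen C)
    (h1 : (1 : G) ∉ C) : {M : Subgroup G | JIMini C M}.Finite := by
  by_contra hinf
  have hinf' : {M : Subgroup G | JIMini C M}.Infinite := hinf
  haveI : Infinite {M : Subgroup G // JIMini C M} := hinf'.to_subtype
  have hw : ∀ M : {M : Subgroup G // JIMini C M}, ∃ y, y ∈ C ∧ Sc y = M.1 := by
    intro M
    obtain ⟨y, hy, hSy⟩ := M.2.1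
    exact ⟨y, hy, hSy⟩
  choose w hwC hwS using hw
  have hwinj : Function.Injective w := by
    intro M M' h
    apply Subtype.ext
    rw [← hwS M, ← hwS M', h]
  set R : Set G := Set.range w with hR
  have hRC : R ⊆ C := by rintro _ ⟨M, rfl⟩; exact hwC M
  have hRinf : R.Infinite := Set.infinite_range_of_injective hwinj
  -- accumulation point
  have hacc : ∃ x ∈ C, ∀ V : Set G, IsOpen V → x ∈ V → (V ∩ R).Infinite := by
    by_contra hno
    push_neg at hno
    have hno' : ∀ x ∈ C, ∃ V : Set G, IsOpen V ∧ x ∈ V ∧ (V ∩ R).Finite := by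
      intro x hx
      obtain ⟨V, hVo, hVx, hVfin⟩ := hno x hx
      exact ⟨V, hVo, hVx, hVfin⟩
    choose! V hVo hVx hVfin using hno'
    have hcov : C ⊆ ⋃ x ∈ C, V x := fun x hx => Set.mem_biUnion hx (hVx x hx)
    obtain ⟨b, hbC, hbfin, hbcov⟩ :=
      (hC.isClosed.isCompact).elim_finite_subcover_image (fun x hx => hVo x hx) hcov
    have hRfin : R.Finite := by
      have hsub : R ⊆ ⋃ x ∈ b, (V x ∩ R) := by
        intro r hr
        obtain ⟨x, hxb, hxV⟩ := Set.mem_iUnion₂.mp (hbcov (hRC hr))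
        exact Set.mem_iUnion₂.mpr ⟨x, hxb, hxV, hr⟩
      exact Set.Finite.subset (Set.Finite.biUnion hbfin (fun x hx => hVfin x (hbC hx))) hsub
    exact hRinf hRfin
  obtain ⟨x, hxC, hxacc⟩ := hacc
  obtain ⟨M₀, hM₀, hM₀le⟩ := JI.exists_mini hJI hC h1 hxC
  set x₀ : G := w ⟨M₀, hM₀⟩ with hx₀def
  have hx₀C : x₀ ∈ C := hwC _
  have hx₀S : Sc x₀ = M₀ := hwS _
  have hx₀ne : x₀ ≠ 1 := fun h => h1 (h ▸ hx₀C)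
  have hM₀open : IsOpen ((M₀ : Subgroup G) : Set G) := hx₀S ▸ Sc_isOpen hJI hx₀ne
  have hM₀closed : IsClosed ((M₀ : Subgroup G) : Set G) := hx₀S ▸ Sc_isClosed x₀
  have hM₀normal : M₀.Normal := hx₀S ▸ Sc_normal x₀
  -- choose U
  have hDopen : IsOpen ({u : G | x₀ * u ∈ C} ∩ (M₀ : Set G)) := by
    refine IsOpen.inter ?_ hM₀open
    exact hC.isOpen.preimage (continuous_mul_left x₀)
  have hD1 : (1 : G) ∈ {u : G | x₀ * u ∈ C} ∩ (M₀ : Set G) := by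
    constructor
    · simpa using hx₀C
    · exact M₀.one_mem
  obtain ⟨U, hUn, hUo, hUD⟩ := JI.exists_openNormal_subset hDopen hD1
  haveI := hUn
  -- pick a second minimal member close to x
  have hOopen : IsOpen ((fun w : G => x⁻¹ * w) ⁻¹' (U : Set G)) :=
    hUo.preimage (continuous_mul_left x⁻¹)
  have hxO : x ∈ (fun w : G => x⁻¹ * w) ⁻¹' (U : Set G) := by
    simpa using U.one_mem
  have hinf2 := hxacc _ hOopen hxO
  obtain ⟨y, ⟨hyO, hyR⟩, hyne⟩ :=
    (hinf2.diff (Set.finite_singleton x₀)).nonempty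
  obtain ⟨M, rfl⟩ := hyR
  have hMne : M.1 ≠ M₀ := by
    intro h
    apply hyne
    have : M = ⟨M₀, hM₀⟩ := Subtype.ext h
    rw [this]
    exact rfl
  have hwMC : w M ∈ C := hwC M
  have hwMne : w M ≠ 1 := fun h => h1 (h ▸ hwMC)
  have hMnormal : M.1.Normal := (hwS M) ▸ Sc_normal (w M)
  have hMclosed : IsClosed ((M.1 : Subgroup G) : Set G) := (hwS M) ▸ Sc_isClosed (w M)
  -- Sc x ≤ M ⊔ U
  have hnear : (w M)⁻¹ * x ∈ U := by
    have : x⁻¹ * (w M) ∈ U := hyO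
    have := U.inv_mem this
    simpa [mul_inv_rev] using this
  have hScx : Sc x ≤ M.1 ⊔ U := by
    have := Sc_le_sup_of_near hUn hUo hnear
    rwa [hwS M] at this
  have hM₀MU : M₀ ≤ M.1 ⊔ U := hM₀le.trans hScx
  -- Dedekind decomposition of x₀
  have hx₀M₀ : x₀ ∈ M₀ := hx₀S ▸ mem_Sc x₀
  have hx₀MU : x₀ ∈ ((M.1 : Subgroup G) : Set G) * (U : Set G) := by
    rw [← Subgroup.mul_normal M.1 U]
    exact hM₀MU hx₀M₀
  obtain ⟨a, ha, u, hu, hx'⟩ := Set.mem_mul.mp hx₀MU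
  have hau : a = x₀ * u⁻¹ := by rw [← hx']; group
  have haC : a ∈ C := by
    rw [hau]
    exact (hUD (U.inv_mem hu)).1
  have haM₀ : a ∈ M₀ := by
    rw [hau]
    exact M₀.mul_mem hx₀M₀ (hUD (U.inv_mem hu)).2
  have hane : a ≠ 1 := fun h => h1 (h ▸ haC)
  have hScaM : Sc a ≤ M.1 := Sc_le hMnormal hMclosed ha
  have hScaM₀ : Sc a ≤ M₀ := Sc_le hM₀normal hM₀closed haM₀
  obtain ⟨M'', hM'', hM''le⟩ := JI.exists_mini hJI hC h1 haC
  obtain ⟨z'', hz''C, hz''S⟩ := hM''.1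
  have heqM : M'' = M.1 := by
    rw [← hz''S]
    exact M.2.2 z'' hz''C (hz''S ▸ (hM''le.trans hScaM))
  have heqM₀ : M'' = M₀ := by
    rw [← hz''S]
    exact hM₀.2 z'' hz''C (hz''S ▸ (hM''le.trans hScaM₀))
  exact hMne (heqM ▸ heqM₀)

lemma JI.finiteIndex_sInf_of_finite {s : Set (Subgroup G)} (hs : s.Finite) :
    (∀ M ∈ s, M.FiniteIndex) → (sInf s).FiniteIndex := by
  refine Set.Finite.induction_on
    (motive := fun t _ => (∀ M ∈ t, M.FiniteIndex) → (sInf t).FiniteIndex) s hs ?_ ?_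
  · intro _
    rw [sInf_empty]
    exact ⟨by simp [Subgroup.index_top]⟩
  · intro a t _ _ ih h
    rw [sInf_insert]
    haveI : a.FiniteIndex := h a (Set.mem_insert a t)
    haveI : (sInf t).FiniteIndex := ih (fun M hM => h M (Set.mem_insert_of_mem a hM))
    infer_instance

/-- The machine: a uniform finite-index lower bound for the closed normal
closures of all points of a clopen set avoiding `1`. -/
lemma JI.machine (hJI : JustInfinite G) {C : Set G} (hC : IsClopen C)
    (h1 : (1 : G) ∉ C) :
    ∃ W : Subgroup G, W.FiniteIndex ∧ ∀ y ∈ C, W ≤ Sc y := by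
  refine ⟨sInf {M : Subgroup G | JIMini C M}, ?_, ?_⟩
  · refine JI.finiteIndex_sInf_of_finite (JI.mini_finite hJI hC h1) ?_
    rintro M ⟨⟨y, hy, rfl⟩, -⟩
    exact Sc_finiteIndex hJI (fun h => h1 (h ▸ hy))
  · intro y hy
    obtain ⟨M, hM, hMle⟩ := JI.exists_mini hJI hC h1 hy
    exact (sInf_le (show M ∈ {M : Subgroup G | JIMini C M} from hM)).trans hMle

end Machine

section MainProof

variable {G : Type*} [Group G] [TopologicalSpace G] [IsTopologicalGroup G] [CompactSpace G]
  [T2Space G] [TotallyDisconnectedSpace G]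

/-- In an infinite profinite group there are open normal subgroups of
arbitrarily large index. -/
lemma JI.exists_bigIndex (hinf : Infinite G) (n : ℕ) :
    ∃ U : Subgroup G, U.Normal ∧ IsOpen (U : Set G) ∧ n < U.index := by
  by_contra hcon
  push_neg at hcon
  set I : Set ℕ := {m | ∃ U : Subgroup G, U.Normal ∧ IsOpen (U : Set G) ∧ U.index = m}
    with hIdef
  have hne : I.Nonempty := by
    refine ⟨1, ⊤, inferInstance, by simp, Subgroup.index_top⟩
  have hbdd : BddAbove I := by
    refine ⟨n, ?_⟩
    rintro m ⟨U, h1, h2, rfl⟩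
    exact hcon U h1 h2
  obtain ⟨B, hBn, hBo, hBi⟩ := Nat.sSup_mem hne hbdd
  have hmax : ∀ U : Subgroup G, U.Normal → IsOpen (U : Set G) → U.index ≤ B.index := by
    intro U h1 h2
    rw [hBi]
    exact le_csSup hbdd ⟨U, h1, h2, rfl⟩
  have hBle : ∀ K : Subgroup G, K.Normal → IsOpen (K : Set G) → B ≤ K := by
    intro K hKn hKo
    haveI := hBn; haveI := hKn
    have hopen : IsOpen ((B ⊓ K : Subgroup G) : Set G) := by
      rw [Subgroup.coe_inf]
      exact hBo.inter hKo
    have hfin : (B ⊓ K).FiniteIndex := JI.finiteIndex_of_isOpen hopen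
    have hle : (B ⊓ K : Subgroup G) ≤ B := inf_le_left
    have heq : (B ⊓ K : Subgroup G) = B :=
      JI.eq_of_le_of_index_le hle hfin
        (hmax _ (Subgroup.normal_inf_normal B K) hopen)
    calc B = B ⊓ K := heq.symm
      _ ≤ K := inf_le_right
  have hbot : B = ⊥ := by
    rw [Subgroup.eq_bot_iff_forall]
    intro b hb
    by_contra hbne
    have hopenV : IsOpen ({b}ᶜ : Set G) := isClosed_singleton.isOpen_compl
    have h1V : (1 : G) ∈ ({b}ᶜ : Set G) := by simpa using (Ne.symm hbne)
    obtain ⟨U, hUn, hUo, hUV⟩ := JI.exists_openNormal_subset hopenV h1V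
    exact (hUV (hBle U hUn hUo hb)) rfl
  have hfinB : B.FiniteIndex := JI.finiteIndex_of_isOpen hBo
  have hne0 := hfinB.index_ne_zero
  rw [hbot, Subgroup.index_bot, Nat.card_eq_zero_of_infinite] at hne0
  exact hne0 rfl

lemma JI.forward (hJI : JustInfinite G) {n : ℕ} (hn : 0 < n) :
    (OI G n).FiniteIndex := by
  obtain ⟨U₀, hU₀n, hU₀o, hU₀i⟩ := JI.exists_bigIndex hJI.1 n
  have hU₀c : IsClosed (U₀ : Set G) := Subgroup.isClosed_of_isOpen _ hU₀o
  have hCclopen : IsClopen ((U₀ : Set G)ᶜ) := ⟨hU₀o.isClosed_compl, hU₀c.isOpen_compl⟩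
  have h1C : (1 : G) ∉ (U₀ : Set G)ᶜ := fun h => h U₀.one_mem
  obtain ⟨W, hWfin, hWle⟩ := JI.machine hJI hCclopen h1C
  have hWcap : W ≤ normalIndexCap G n := by
    refine le_iInf fun K => le_iInf fun hK => ?_
    obtain ⟨hKn, hKo, hKi⟩ := hK
    have hnsub : ¬ (K : Set G) ⊆ (U₀ : Set G) := by
      intro hsub
      have hle : K ≤ U₀ := fun a ha => hsub ha
      have hKfin : K.FiniteIndex := JI.finiteIndex_of_isOpen hKo
      have hdvd := Subgroup.index_dvd_of_le hle
      have := Nat.le_of_dvd (Nat.pos_of_ne_zero hKfin.index_ne_zero) hdvd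
      omega
    obtain ⟨y, hyK, hyU₀⟩ := Set.not_subset.mp hnsub
    exact (hWle y hyU₀).trans (Sc_le hKn (Subgroup.isClosed_of_isOpen _ hKo) hyK)
  have hcapfin : (normalIndexCap G n).FiniteIndex := JI.finiteIndex_mono hWcap hWfin
  have hcapclosed : IsClosed ((normalIndexCap G n : Subgroup G) : Set G) := by
    rw [normalIndexCap, Subgroup.coe_iInf]
    refine isClosed_iInter fun K => ?_
    rw [Subgroup.coe_iInf]
    exact isClosed_iInter fun hK => Subgroup.isClosed_of_isOpen _ hK.2.1
  haveI := hcapfin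
  have hcapopen : IsOpen ((normalIndexCap G n : Subgroup G) : Set G) :=
    Subgroup.isOpen_of_isClosed_of_finiteIndex _ hcapclosed
  have hC'clopen : IsClopen (((normalIndexCap G n : Subgroup G) : Set G)ᶜ) :=
    ⟨hcapopen.isClosed_compl, hcapclosed.isOpen_compl⟩
  have h1C' : (1 : G) ∉ ((normalIndexCap G n : Subgroup G) : Set G)ᶜ :=
    fun h => h (normalIndexCap G n).one_mem
  obtain ⟨W', hW'fin, hW'le⟩ := JI.machine hJI hC'clopen h1C'
  have hW'obl : W' ≤ ⨅ (K : Subgroup G)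
      (_ : K.Normal ∧ IsOpen (K : Set G) ∧ ¬ K ≤ normalIndexCap G n), K := by
    refine le_iInf fun K => le_iInf fun hK => ?_
    obtain ⟨hKn, hKo, hKle⟩ := hK
    obtain ⟨y, hyK, hyC⟩ := SetLike.not_le_iff_exists.mp hKle
    exact (hW'le y hyC).trans (Sc_le hKn (Subgroup.isClosed_of_isOpen _ hKo) hyK)
  have hfinal : W ⊓ W' ≤ OI G n := by
    rw [OI, obliqueCore]
    exact le_inf (inf_le_left.trans hWcap) (inf_le_right.trans hW'obl)
  haveI := hWfin
  haveI := hW'fin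
  exact JI.finiteIndex_mono hfinal inferInstance

lemma JI.backward (h : ∀ n : ℕ, 0 < n → (OI G n).FiniteIndex) :
    Finite G ∨ JustInfinite G := by
  rcases finite_or_infinite G with hF | hI
  · exact Or.inl hF
  refine Or.inr ⟨hI, fun N hNn hNc hNbot => ?_⟩
  obtain ⟨g, hgN, hg1⟩ : ∃ g ∈ N, g ≠ (1 : G) := by
    by_contra h'
    push_neg at h'
    exact hNbot ((Subgroup.eq_bot_iff_forall N).mpr h')
  have hopenV : IsOpen ({g}ᶜ : Set G) := isClosed_singleton.isOpen_compl
  have h1V : (1 : G) ∈ ({g}ᶜ : Set G) := by simpa using (Ne.symm hg1)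
  obtain ⟨K₀, hK₀n, hK₀o, hK₀sub⟩ := JI.exists_openNormal_subset hopenV h1V
  have hgK₀ : g ∉ K₀ := fun hmem => (hK₀sub hmem) rfl
  have hK₀fin : K₀.FiniteIndex := JI.finiteIndex_of_isOpen hK₀o
  set n := K₀.index with hn
  have hn0 : 0 < n := Nat.pos_of_ne_zero hK₀fin.index_ne_zero
  have hOI := h n hn0
  have hle : OI G n ≤ N := by
    refine JI.le_of_forall_le_sup hNc ?_
    intro U hUn hUo
    haveI := hNn; haveI := hUn
    by_cases hc : N ⊔ U ≤ normalIndexCap G n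
    · exfalso
      have hcap : normalIndexCap G n ≤ K₀ := by
        rw [normalIndexCap]
        exact iInf₂_le K₀ ⟨hK₀n, hK₀o, le_rfl⟩
      exact hgK₀ (hcap (hc (Subgroup.mem_sup_left hgN)))
    · have hsupn : (N ⊔ U).Normal := Subgroup.sup_normal N U
      have hsupo : IsOpen ((N ⊔ U : Subgroup G) : Set G) :=
        Subgroup.isOpen_mono le_sup_right hUo
      calc OI G n ≤ ⨅ (K : Subgroup G)
            (_ : K.Normal ∧ IsOpen (K : Set G) ∧ ¬ K ≤ normalIndexCap G n), K := by
            rw [OI, obliqueCore]; exact inf_le_right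
        _ ≤ N ⊔ U := iInf₂_le _ ⟨hsupn, hsupo, hc⟩
  exact JI.finiteIndex_mono hle hOI

lemma JI.OI_zero : OI G 0 = ⊤ := by
  have hcap : normalIndexCap G 0 = ⊤ := by
    rw [normalIndexCap]
    have h : ∀ K : Subgroup G, ¬ (K.Normal ∧ IsOpen (K : Set G) ∧ K.index ≤ 0) := by
      rintro K ⟨-, h2, h3⟩
      exact (JI.finiteIndex_of_isOpen h2).index_ne_zero (Nat.le_zero.mp h3)
    rw [iInf_congr (fun K => iInf_neg (h K))]
    exact iInf_top
  rw [OI, hcap, obliqueCore]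
  have h : ∀ K : Subgroup G, ¬ (K.Normal ∧ IsOpen (K : Set G) ∧ ¬ K ≤ (⊤ : Subgroup G)) := by
    rintro K ⟨-, -, h3⟩
    exact h3 le_top
  rw [iInf_congr (fun K => iInf_neg (h K))]
  rw [iInf_top, inf_top_eq]

end MainProof

/-- A profinite group `G` is finite or just infinite if and only if `OI_n(G)` has
finite index in `G` for every positive integer `n`; equivalently, if and only if
there is a function `η : ℕ → ℕ` bounding the generalised obliquity function. -/
theorem finite_or_just_infinite_iff_obliquity (G : Type*) [Group G] [TopologicalSpace G]
    [IsTopologicalGroup G] [CompactSpace G] [T2Space G] [TotallyDisconnectedSpace G] :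
    ((Finite G ∨ JustInfinite G) ↔ ∀ n : ℕ, 0 < n → (OI G n).FiniteIndex) ∧
    ((Finite G ∨ JustInfinite G) ↔ ∃ η : ℕ → ℕ, ∀ n : ℕ, obFun G n ≤ (η n : Cardinal)) := by
  have Lfwd : (Finite G ∨ JustInfinite G) → ∀ n : ℕ, 0 < n → (OI G n).FiniteIndex := by
    rintro (hF | hJI) n hn
    · haveI := hF
      haveI : Finite (G ⧸ OI G n) := Quotient.finite _
      exact Subgroup.finiteIndex_of_finite_quotient
    · exact JI.forward hJI hn
  have Lbwd : (∀ n : ℕ, 0 < n → (OI G n).FiniteIndex) → (Finite G ∨ JustInfinite G) :=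
    JI.backward
  refine ⟨⟨Lfwd, Lbwd⟩, ?_⟩
  constructor
  · intro hLHS
    refine ⟨fun n => (OI G n).index, fun n => ?_⟩
    have hfin : (OI G n).FiniteIndex := by
      cases n with
      | zero =>
        rw [JI.OI_zero]
        exact ⟨by simp [Subgroup.index_top]⟩
      | succ k => exact Lfwd hLHS _ (Nat.succ_pos k)
    haveI := hfin
    haveI hfq : Finite (G ⧸ OI G n) := Subgroup.finite_quotient_of_finiteIndex
    have hlt : Cardinal.mk (G ⧸ OI G n) < Cardinal.aleph0 :=
      Cardinal.lt_aleph0_iff_finite.mpr hfq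
    have heq : ((OI G n).index : Cardinal) = Cardinal.mk (G ⧸ OI G n) := by
      rw [Subgroup.index_eq_card, Nat.card]
      exact Cardinal.cast_toNat_of_lt_aleph0 hlt
    rw [obFun, ← heq]
  · rintro ⟨η, hη⟩
    apply Lbwd
    intro n hn
    have hle := hη n
    have hlt : Cardinal.mk (G ⧸ OI G n) < Cardinal.aleph0 := by
      rw [obFun] at hle
      exact lt_of_le_of_lt hle (Cardinal.nat_lt_aleph0 _)
    haveI hfin : Finite (G ⧸ OI G n) := Cardinal.lt_aleph0_iff_finite.mp hlt
    exact Subgroup.finiteIndex_of_finite_quotient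
end

section
/- Let G be a just infinite profinite group, let H be a closed subgroup of G of finite index h, and let t be the index in G of the normal core Core_G(H) = ⋂_{g ∈ G} gHg⁻¹. Then for all positive integers n, h · ob*_H(n) ≤ ob*_G(t·nʰ). -/
/-- The strong oblique core
`Ob*_G(H) = H ∩ ⋂ {K ≤_o G ∣ H ≤ N_G(K), K ≰ H}`. -/
def strongObliqueCore {G : Type*} [Group G] [TopologicalSpace G] (H : Subgroup G) :
    Subgroup G :=
  H ⊓ ⨅ (K : Subgroup G) (_ : IsOpen (K : Set G) ∧ H ≤ Subgroup.normalizer (K : Set G) ∧ ¬ K ≤ H), K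

/-- `OI*_n(G) = Ob*_G(I⊲_n(G))`. -/
def OIstar (G : Type*) [Group G] [TopologicalSpace G] (n : ℕ) : Subgroup G :=
  strongObliqueCore (normalIndexCap G n)

/-- The strong generalised obliquity function `ob*_G(n) = |G : OI*_n(G)|`, with
values in `Cardinal` so that infinite index is recorded faithfully. -/
noncomputable def obStarFun (G : Type*) [Group G] [TopologicalSpace G] (n : ℕ) : Cardinal :=
  Cardinal.mk (G ⧸ OIstar G n)

namespace ObStarAux

open Subgroup

variable {G : Type*} [Group G] [TopologicalSpace G] [IsTopologicalGroup G]

lemma finiteIndex_of_isOpen [CompactSpace G] (K : Subgroup G) (h : IsOpen (K : Set G)) :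
    K.FiniteIndex :=
  haveI := K.quotient_finite_of_isOpen h
  K.finiteIndex_of_finite_quotient

lemma mem_map_subtype {H : Subgroup G} {S : Subgroup ↥H} {a : G}
    (hmem : a ∈ S.map H.subtype) (haH : a ∈ H) : (⟨a, haH⟩ : ↥H) ∈ S := by
  obtain ⟨b, hb, hbe⟩ := hmem
  have : b = (⟨a, haH⟩ : ↥H) := Subtype.ext hbe
  exact this ▸ hb

lemma isOpen_map_subtype {H : Subgroup G} (hHo : IsOpen (H : Set G)) {K : Subgroup ↥H}
    (hKo : IsOpen (K : Set ↥H)) : IsOpen ((K.map H.subtype : Subgroup G) : Set G) := by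
  have : ((K.map H.subtype : Subgroup G) : Set G) = (Subtype.val : ↥H → G) '' (K : Set ↥H) := by
    ext x
    simp [Subgroup.mem_map]
  rw [this]
  exact hHo.isOpenMap_subtype_val _ hKo

lemma le_normalizer_map_subtype {H : Subgroup G} {K : Subgroup ↥H} (hKn : K.Normal) :
    H ≤ Subgroup.normalizer ((K.map H.subtype : Subgroup G) : Set G) := by
  intro x hx
  rw [Subgroup.mem_normalizer_iff]
  intro y
  constructor
  · rintro ⟨k, hk, rfl⟩
    exact ⟨⟨x, hx⟩ * k * ⟨x, hx⟩⁻¹, hKn.conj_mem k hk ⟨x, hx⟩, rfl⟩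
  · rintro ⟨k, hk, hky⟩
    have hkmem : (⟨x, hx⟩ : ↥H)⁻¹ * k * ⟨x, hx⟩ ∈ K := by
      simpa using hKn.conj_mem k hk (⟨x, hx⟩ : ↥H)⁻¹
    refine ⟨_, hkmem, ?_⟩
    have hky' : (k : G) = x * y * x⁻¹ := hky
    show x⁻¹ * (k : G) * x = y
    rw [hky']
    group

lemma cap_le_map [CompactSpace G] (H : Subgroup G) (hHcl : IsClosed (H : Set G))
    (hfin : H.FiniteIndex) {n : ℕ} (hn : 0 < n) (K : Subgroup ↥H) (hKn : K.Normal)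
    (hKo : IsOpen (K : Set ↥H)) (hKi : K.index ≤ n) :
    normalIndexCap G (H.normalCore.index * n ^ H.index) ≤ K.map H.subtype := by
  haveI := hfin
  have hHo : IsOpen (H : Set G) := H.isOpen_of_isClosed_of_finiteIndex hHcl
  haveI : CompactSpace ↥H := isCompact_iff_compactSpace.mp hHcl.isCompact
  set K' : Subgroup G := K.map H.subtype with hK'
  have hK'o : IsOpen (K' : Set G) := isOpen_map_subtype hHo hKo
  have hK'nor : H ≤ Subgroup.normalizer (K' : Set G) := le_normalizer_map_subtype hKn
  -- the normal core of K' as a finite intersection over cosets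
  have core_eq : K'.normalCore =
      ⨅ q : G ⧸ H, K'.comap (MulAut.conj (Quotient.out q)⁻¹).toMonoidHom := by
    apply le_antisymm
    · refine le_iInf fun q a ha => ?_
      rw [Subgroup.mem_comap]
      simpa using ha (Quotient.out q)⁻¹
    · intro a ha
      intro b
      have hq := Subgroup.mem_iInf.mp ha (QuotientGroup.mk b⁻¹ : G ⧸ H)
      rw [Subgroup.mem_comap] at hq
      set r := Quotient.out (QuotientGroup.mk b⁻¹ : G ⧸ H) with hr
      have hbr : b * r ∈ H := by
        have h1 : (QuotientGroup.mk r : G ⧸ H) = QuotientGroup.mk b⁻¹ := Quotient.out_eq _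
        have h2 : (b⁻¹)⁻¹ * r ∈ H := (QuotientGroup.eq).mp h1.symm
        simpa using h2
      have hq' : r⁻¹ * a * r ∈ K' := by simpa using hq
      have key := (Subgroup.mem_normalizer_iff''.mp (hK'nor hbr) (b * a * b⁻¹)).mpr
      have heq : (b * r)⁻¹ * (b * a * b⁻¹) * (b * r) = r⁻¹ * a * r := by group
      exact key (by rw [heq]; exact hq')
  haveI : Finite (G ⧸ H) := H.finite_quotient_of_finiteIndex
  haveI : Fintype (G ⧸ H) := Fintype.ofFinite _
  set C := H.normalCore with hC
  haveI : C.FiniteIndex := H.finiteIndex_normalCore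
  have hKfin : K.FiniteIndex := finiteIndex_of_isOpen K hKo
  have hfq : ∀ q : G ⧸ H,
      (K'.comap (MulAut.conj (Quotient.out q)⁻¹).toMonoidHom).relIndex C ≤ n ∧
      (K'.comap (MulAut.conj (Quotient.out q)⁻¹).toMonoidHom).relIndex C ≠ 0 := by
    intro q
    set g := (Quotient.out q)⁻¹ with hg
    set φ := (MulAut.conj g).toMonoidHom with hφ
    have hCle : C ≤ H.comap φ := by
      intro c hc
      rw [Subgroup.mem_comap]
      simpa [hφ] using hc g
    have hsub : K'.subgroupOf H = K := comap_map_eq_self_of_injective H.subtype_injective K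
    have heq : (K'.comap φ).relIndex (H.comap φ) = K.index := by
      rw [relIndex_comap, map_comap_eq_self_of_surjective (MulAut.conj g).surjective]
      rw [relIndex, hsub]
    have hφfin : (K'.comap φ).FiniteIndex := by
      apply finiteIndex_of_isOpen
      have : ((K'.comap φ : Subgroup G) : Set G) = φ ⁻¹' (K' : Set G) := rfl
      rw [this]
      exact hK'o.preimage (IsTopologicalGroup.continuous_conj g)
    constructor
    · calc (K'.comap φ).relIndex C ≤ (K'.comap φ).relIndex (H.comap φ) :=
            relIndex_le_of_le_right hCle (heq ▸ hKfin.index_ne_zero)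
        _ = K.index := heq
        _ ≤ n := hKi
    · haveI := hφfin
      rw [relIndex]
      exact Subgroup.FiniteIndex.index_ne_zero
  have hcore_rel_le : (K'.normalCore).relIndex C ≤ n ^ H.index := by
    rw [core_eq]
    calc (⨅ q : G ⧸ H, K'.comap (MulAut.conj (Quotient.out q)⁻¹).toMonoidHom).relIndex C
        ≤ ∏ q : G ⧸ H,
            (K'.comap (MulAut.conj (Quotient.out q)⁻¹).toMonoidHom).relIndex C :=
          relIndex_iInf_le _
      _ ≤ ∏ _q : G ⧸ H, n := Finset.prod_le_prod' fun q _ => (hfq q).1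
      _ = n ^ H.index := by
          rw [Finset.prod_const, Finset.card_univ, H.index_eq_card, Nat.card_eq_fintype_card]
  have hcore_rel_ne : (K'.normalCore).relIndex C ≠ 0 := by
    rw [core_eq]
    exact relIndex_iInf_ne_zero fun q => (hfq q).2
  set M := C ⊓ K'.normalCore with hM
  have hMn : M.Normal := by
    rw [hM, hC]
    exact Subgroup.normal_inf_normal _ _
  have hMindex : M.index = (K'.normalCore).relIndex C * C.index := by
    rw [← relIndex_mul_index (inf_le_left : M ≤ C), inf_relIndex_left]
  have hMle : M.index ≤ C.index * n ^ H.index := by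
    rw [hMindex, mul_comm]
    exact Nat.mul_le_mul_left _ hcore_rel_le
  have hMne : M.index ≠ 0 := by
    rw [hMindex]
    exact Nat.mul_ne_zero hcore_rel_ne Subgroup.FiniteIndex.index_ne_zero
  haveI : M.FiniteIndex := ⟨hMne⟩
  have hMcl : IsClosed (M : Set G) := by
    have h1 := H.normalCore_isClosed hHcl
    have h2 := K'.normalCore_isClosed (K'.isClosed_of_isOpen hK'o)
    rw [hM, Subgroup.coe_inf]
    exact h1.inter h2
  have hMo : IsOpen (M : Set G) := M.isOpen_of_isClosed_of_finiteIndex hMcl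
  calc normalIndexCap G (C.index * n ^ H.index) ≤ M :=
        iInf_le_of_le M (iInf_le_of_le ⟨hMn, hMo, hMle⟩ le_rfl)
    _ ≤ K'.normalCore := inf_le_right
    _ ≤ K' := normalCore_le _

lemma cap_le_base [CompactSpace G] (H : Subgroup G) (hHcl : IsClosed (H : Set G))
    (hfin : H.FiniteIndex) {n : ℕ} (hn : 0 < n) :
    normalIndexCap G (H.normalCore.index * n ^ H.index) ≤ H := by
  have := cap_le_map H hHcl hfin hn ⊤ inferInstance isOpen_univ
    (by rw [Subgroup.index_top]; omega)
  rwa [← MonoidHom.range_eq_map, H.range_subtype] at this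

lemma cap_le [CompactSpace G] (H : Subgroup G) (hHcl : IsClosed (H : Set G))
    (hfin : H.FiniteIndex) {n : ℕ} (hn : 0 < n) :
    normalIndexCap G (H.normalCore.index * n ^ H.index) ≤
      (normalIndexCap ↥H n).map H.subtype := by
  have hH := cap_le_base H hHcl hfin hn
  intro a ha
  refine ⟨⟨a, hH ha⟩, ?_, rfl⟩
  refine Subgroup.mem_iInf.mpr fun K => Subgroup.mem_iInf.mpr fun hK => ?_
  obtain ⟨hKn, hKo, hKi⟩ := hK
  exact mem_map_subtype (cap_le_map H hHcl hfin hn K hKn hKo hKi ha) (hH ha)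

lemma OIstar_le [CompactSpace G] (H : Subgroup G) (hHcl : IsClosed (H : Set G))
    (hfin : H.FiniteIndex) {n : ℕ} (hn : 0 < n) :
    OIstar G (H.normalCore.index * n ^ H.index) ≤ (OIstar ↥H n).map H.subtype := by
  haveI := hfin
  have hHo : IsOpen (H : Set G) := H.isOpen_of_isClosed_of_finiteIndex hHcl
  set m := H.normalCore.index * n ^ H.index with hm
  have hcap := cap_le H hHcl hfin hn
  have hH := cap_le_base H hHcl hfin hn
  intro x hx
  obtain ⟨hxA, hxK⟩ := hx
  have hxH : x ∈ H := hH hxA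
  have hxB : (⟨x, hxH⟩ : ↥H) ∈ normalIndexCap ↥H n := mem_map_subtype (hcap hxA) hxH
  refine ⟨⟨x, hxH⟩, ⟨hxB, ?_⟩, rfl⟩
  refine Subgroup.mem_iInf.mpr fun K => Subgroup.mem_iInf.mpr fun hK => ?_
  obtain ⟨hKo, hKnor, hKnle⟩ := hK
  set K' : Subgroup G := K.map H.subtype with hK'
  have hK'o : IsOpen (K' : Set G) := isOpen_map_subtype hHo hKo
  have h1 : normalIndexCap G m ≤ Subgroup.normalizer (K' : Set G) := by
    intro a ha
    have haH : a ∈ H := hH ha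
    have haB : (⟨a, haH⟩ : ↥H) ∈ normalIndexCap ↥H n := mem_map_subtype (hcap ha) haH
    have hnor := hKnor haB
    rw [Subgroup.mem_normalizer_iff] at hnor ⊢
    intro y
    constructor
    · rintro ⟨k, hk, rfl⟩
      exact ⟨⟨a, haH⟩ * k * ⟨a, haH⟩⁻¹, (hnor k).mp hk, rfl⟩
    · rintro ⟨k, hk, hky⟩
      have hky' : (k : G) = a * y * a⁻¹ := hky
      have h2 : (⟨a, haH⟩ : ↥H)⁻¹ * k * ⟨a, haH⟩ ∈ K := by
        have := (hnor ((⟨a, haH⟩ : ↥H)⁻¹ * k * ⟨a, haH⟩)).mpr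
        apply this
        have : (⟨a, haH⟩ : ↥H) * ((⟨a, haH⟩ : ↥H)⁻¹ * k * ⟨a, haH⟩) * (⟨a, haH⟩ : ↥H)⁻¹ = k := by
          group
        rw [this]
        exact hk
      refine ⟨_, h2, ?_⟩
      show a⁻¹ * (k : G) * a = y
      rw [hky']
      group
  have h2 : ¬ K' ≤ normalIndexCap G m := by
    intro hle
    apply hKnle
    intro k hk
    have hkG : (k : G) ∈ normalIndexCap G m := hle ⟨k, hk, rfl⟩
    have := mem_map_subtype (hcap hkG) k.2
    simpa using this
  have hfinal : x ∈ K' :=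
    Subgroup.mem_iInf.mp (Subgroup.mem_iInf.mp hxK K') ⟨hK'o, h1, h2⟩
  exact mem_map_subtype hfinal hxH

end ObStarAux

/-- Theorem C (ii): if `G` is a just infinite profinite group, `H` a closed subgroup
of index `h`, and `t = |G : Core_G(H)|`, then `h ⬝ ob*_H(n) ≤ ob*_G(t n^h)` for all
positive integers `n`. -/
theorem obStarFun_le (G : Type*) [Group G] [TopologicalSpace G]
    [IsTopologicalGroup G] [CompactSpace G] [T2Space G] [TotallyDisconnectedSpace G]
    (hG : JustInfinite G) (H : Subgroup G) (hHcl : IsClosed (H : Set G))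
    (h t : ℕ) (hh : H.index = h) (hfin : H.FiniteIndex) (ht : H.normalCore.index = t) :
    ∀ n : ℕ, 0 < n →
      (h : Cardinal) * obStarFun ↥H n ≤ obStarFun G (t * n ^ h) := by
  intro n hn
  subst hh; subst ht
  haveI := hfin
  set m := H.normalCore.index * n ^ H.index with hm
  have hle : OIstar G m ≤ (OIstar ↥H n).map H.subtype := ObStarAux.OIstar_le H hHcl hfin hn
  have hSH : (OIstar ↥H n).map H.subtype ≤ H := Subgroup.map_subtype_le _
  have h1 : Cardinal.mk (G ⧸ (OIstar ↥H n).map H.subtype) ≤ Cardinal.mk (G ⧸ OIstar G m) := by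
    have hsurj : Function.Surjective
        (Quotient.map' (id : G → G) (fun a b hab => by
          rw [QuotientGroup.leftRel_apply] at hab ⊢
          exact hle hab) :
          G ⧸ OIstar G m → G ⧸ (OIstar ↥H n).map H.subtype) := by
      intro y
      induction y using Quotient.inductionOn' with
      | h x => exact ⟨Quotient.mk'' x, rfl⟩
    exact Cardinal.mk_le_of_surjective hsurj
  have hsub : ((OIstar ↥H n).map H.subtype).subgroupOf H = OIstar ↥H n :=
    Subgroup.comap_map_eq_self_of_injective H.subtype_injective _
  have h2 : Cardinal.mk (G ⧸ (OIstar ↥H n).map H.subtype)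
      = Cardinal.mk (G ⧸ H) * Cardinal.mk (↥H ⧸ OIstar ↥H n) := by
    have e := Subgroup.quotientEquivProdOfLE hSH
    rw [hsub] at e
    rw [Cardinal.mk_congr e, Cardinal.mk_prod, Cardinal.lift_id, Cardinal.lift_id]
  haveI : Finite (G ⧸ H) := H.finite_quotient_of_finiteIndex
  have h3 : Cardinal.mk (G ⧸ H) = (H.index : Cardinal) := by
    rw [← Nat.cast_card, H.index_eq_card]
  calc (H.index : Cardinal) * obStarFun ↥H n
      = Cardinal.mk (G ⧸ (OIstar ↥H n).map H.subtype) := by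
        rw [h2, h3]; rfl
    _ ≤ Cardinal.mk (G ⧸ OIstar G m) := h1
    _ = obStarFun G m := rfl
end

section
/- Let G be a just infinite profinite group, and for a positive integer n let 𝓘_n be the set of closed subgroups of G containing I⊲_n(G) (a finite set, since I⊲_n(G) is open). Then ob*_G(n) ≤ ∏_{L ∈ 𝓘_n} |G : L| · ob_L(n). -/
/-! ### Auxiliary lemmas -/

open scoped ENNReal Pointwise

section Aux

/-- An open subgroup of a compact topological group has finite index. -/
lemma auxFiniteIndexOfIsOpen {G : Type*} [Group G] [TopologicalSpace G] [IsTopologicalGroup G]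
    [CompactSpace G] {K : Subgroup G} (hK : IsOpen (K : Set G)) : K.FiniteIndex := by
  have hcover : (Set.univ : Set G) ⊆ ⋃ g : G, g • (K : Set G) := by
    intro x _
    exact Set.mem_iUnion.2 ⟨x, Set.mem_smul_set.2 ⟨1, K.one_mem, mul_one x⟩⟩
  obtain ⟨t, ht⟩ := isCompact_univ.elim_finite_subcover (fun g : G => g • (K : Set G))
    (fun g => hK.smul g) hcover
  have hsurj : Function.Surjective (fun g : { x // x ∈ t } =>
      (QuotientGroup.mk g.val : G ⧸ K)) := by
    intro q
    refine QuotientGroup.induction_on q ?_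
    intro x
    have hx := ht (Set.mem_univ x)
    rw [Set.mem_iUnion₂] at hx
    obtain ⟨g, hgt, hgx⟩ := hx
    obtain ⟨k, hk, hgk⟩ := Set.mem_smul_set.1 hgx
    refine ⟨⟨g, hgt⟩, ?_⟩
    have : (QuotientGroup.mk (g * k) : G ⧸ K) = QuotientGroup.mk g :=
      QuotientGroup.mk_mul_of_mem g hk
    simp only [smul_eq_mul] at hgk
    rw [← hgk]
    exact this.symm ▸ this
  have : Finite (G ⧸ K) := Finite.of_surjective _ hsurj
  exact K.finiteIndex_of_finite_quotient

/-- The set of subgroups containing a finite-index subgroup is finite. -/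
lemma auxAboveFinite {G : Type*} [Group G] (Z : Subgroup G) [Finite (G ⧸ Z)] :
    {H : Subgroup G | Z ≤ H}.Finite := by
  have hkey : ∀ H₁ H₂ : Subgroup G, Z ≤ H₂ →
      (QuotientGroup.mk '' (H₁ : Set G) : Set (G ⧸ Z)) ⊆ QuotientGroup.mk '' (H₂ : Set G) →
      H₁ ≤ H₂ := by
    intro H₁ H₂ h₂ hsub x hx
    obtain ⟨y, hy, hyx⟩ := hsub ⟨x, hx, rfl⟩
    have hz : y⁻¹ * x ∈ Z := QuotientGroup.eq.1 hyx
    have := H₂.mul_mem hy (h₂ hz)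
    simpa [mul_assoc] using this
  have hinj : Function.Injective fun H : {H : Subgroup G // Z ≤ H} =>
      (QuotientGroup.mk '' ((H : Subgroup G) : Set G) : Set (G ⧸ Z)) := by
    rintro ⟨H₁, h₁⟩ ⟨H₂, h₂⟩ h
    exact Subtype.ext (le_antisymm (hkey _ _ h₂ h.le) (hkey _ _ h₁ h.ge))
  have : Finite {H : Subgroup G // Z ≤ H} := Finite.of_injective _ hinj
  rw [← Subtype.range_coe_subtype (p := fun H : Subgroup G => Z ≤ H)]
  exact Set.finite_range _

lemma auxNormalIInf {G : Type*} [Group G] {ι : Sort*} (f : ι → Subgroup G)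
    (h : ∀ i, (f i).Normal) : (⨅ i, f i).Normal :=
  ⟨fun x hx g => Subgroup.mem_iInf.2 fun i => (h i).conj_mem x (Subgroup.mem_iInf.1 hx i) g⟩

open MeasureTheory in
/-- In a compact group with a left-invariant measure, the measure of an open
subgroup satisfies `μ(univ) = index • μ(K)`. -/
lemma auxMeasureUnivEq {G : Type*} [Group G] [TopologicalSpace G] [IsTopologicalGroup G]
    [CompactSpace G] [MeasurableSpace G] [BorelSpace G]
    (μ : Measure G) [μ.IsMulLeftInvariant]
    {K : Subgroup G} (hK : IsOpen (K : Set G)) :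
    μ Set.univ = (K.index : ℝ≥0∞) * μ (K : Set G) := by
  haveI : K.FiniteIndex := auxFiniteIndexOfIsOpen hK
  haveI : Finite (G ⧸ K) := K.finite_quotient_of_finiteIndex
  haveI : Fintype (G ⧸ K) := Fintype.ofFinite _
  have key : ∀ q : G ⧸ K, μ (QuotientGroup.mk ⁻¹' {q}) = μ (K : Set G) ∧
      MeasurableSet (QuotientGroup.mk ⁻¹' {q} : Set G) := by
    intro q
    obtain ⟨g, rfl⟩ := QuotientGroup.mk_surjective q
    have heq : (QuotientGroup.mk ⁻¹' {(QuotientGroup.mk g : G ⧸ K)} : Set G) =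
        (fun x => g⁻¹ * x) ⁻¹' (K : Set G) := by
      ext x
      simp only [Set.mem_preimage, Set.mem_singleton_iff, SetLike.mem_coe]
      rw [eq_comm]
      exact QuotientGroup.eq
    constructor
    · rw [heq]; exact measure_preimage_mul μ g⁻¹ _
    · rw [heq]; exact (hK.preimage (continuous_mul_left g⁻¹)).measurableSet
  have hpart : (Set.univ : Set G) = ⋃ q : G ⧸ K, QuotientGroup.mk ⁻¹' {q} := by
    ext x
    simp only [Set.mem_univ, Set.mem_iUnion, Set.mem_preimage, Set.mem_singleton_iff, true_iff]
    exact ⟨QuotientGroup.mk x, rfl⟩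
  have hdisj : Pairwise (Function.onFun Disjoint
      fun q : G ⧸ K => (QuotientGroup.mk ⁻¹' {q} : Set G)) := by
    intro a b hab
    refine Set.disjoint_left.2 fun x hxa hxb => hab ?_
    simp only [Set.mem_preimage, Set.mem_singleton_iff] at hxa hxb
    rw [← hxa, ← hxb]
  calc μ Set.univ = μ (⋃ q : G ⧸ K, QuotientGroup.mk ⁻¹' {q}) := by rw [← hpart]
    _ = ∑' q : G ⧸ K, μ (QuotientGroup.mk ⁻¹' {q}) :=
        measure_iUnion hdisj fun q => (key q).2
    _ = ∑' _q : G ⧸ K, μ (K : Set G) := tsum_congr fun q => (key q).1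
    _ = (Fintype.card (G ⧸ K) : ℝ≥0∞) * μ (K : Set G) := by
        rw [tsum_fintype, Finset.sum_const, Finset.card_univ, nsmul_eq_mul]
    _ = (K.index : ℝ≥0∞) * μ (K : Set G) := by
        rw [Subgroup.index_eq_card, Nat.card_eq_fintype_card]

open MeasureTheory in
/-- **Key lemma**: in a just infinite profinite group, the subgroup `I⊲_n(G)` is open. -/
lemma auxNormalIndexCapIsOpen {G : Type*} [Group G] [TopologicalSpace G] [IsTopologicalGroup G]
    [CompactSpace G] [T2Space G] (hG : JustInfinite G) (n : ℕ) :
    IsOpen ((normalIndexCap G n : Subgroup G) : Set G) := by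
  classical
  set S := {K : Subgroup G | K.Normal ∧ IsOpen (K : Set G) ∧ K.index ≤ n} with hSdef
  by_cases hfin : S.Finite
  · have hset : ((normalIndexCap G n : Subgroup G) : Set G) = ⋂ K ∈ S, (K : Set G) := by
      rw [normalIndexCap, Subgroup.coe_iInf]
      exact Set.iInter_congr fun K => Subgroup.coe_iInf
    rw [hset]
    exact hfin.isOpen_biInter fun K hK => hK.2.1
  · exfalso
    haveI : Infinite G := hG.1
    haveI : Infinite ↥S := Set.infinite_coe_iff.2 hfin
    obtain e := Infinite.natEmbedding ↥S
    set K : ℕ → Subgroup G := fun i => (e i).val with hKdef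
    have hKinj : Function.Injective K := Subtype.val_injective.comp e.injective
    have hKmem : ∀ i, K i ∈ S := fun i => (e i).2
    borelize G
    set K₀ : TopologicalSpace.PositiveCompacts G :=
      ⟨⟨Set.univ, isCompact_univ⟩, by
        simpa [interior_univ] using (Set.univ_nonempty : (Set.univ : Set G).Nonempty)⟩ with hK₀
    set μ : Measure G := Measure.haarMeasure K₀ with hμ
    have hμuniv : μ Set.univ = 1 := Measure.haarMeasure_self
    -- each K i has measure at least n⁻¹
    have hμK : ∀ i, ((n : ℝ≥0∞))⁻¹ ≤ μ (K i : Set G) := by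
      intro i
      have hopen := (hKmem i).2.1
      have hIdx : μ Set.univ = ((K i).index : ℝ≥0∞) * μ (K i : Set G) :=
        auxMeasureUnivEq μ hopen
      have hne : ((K i).index : ℝ≥0∞) ≠ 0 := by
        have : (K i).index ≠ 0 := (auxFiniteIndexOfIsOpen hopen).index_ne_zero
        exact_mod_cast this
      have htop : ((K i).index : ℝ≥0∞) ≠ ⊤ := ENNReal.natCast_ne_top _
      have hval : μ (K i : Set G) = (((K i).index : ℝ≥0∞))⁻¹ := by
        calc μ (K i : Set G)
            = (((K i).index : ℝ≥0∞))⁻¹ * (((K i).index : ℝ≥0∞) * μ (K i : Set G)) := by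
              rw [← mul_assoc, ENNReal.inv_mul_cancel hne htop, one_mul]
          _ = (((K i).index : ℝ≥0∞))⁻¹ * 1 := by rw [← hIdx, hμuniv]
          _ = (((K i).index : ℝ≥0∞))⁻¹ := mul_one _
      rw [hval]
      have : ((K i).index : ℝ≥0∞) ≤ (n : ℝ≥0∞) := by exact_mod_cast (hKmem i).2.2
      exact ENNReal.inv_le_inv.2 this
    -- the limsup of the K i
    set C : ℕ → Set G := fun m => ⋃ (i : ℕ) (_ : m ≤ i), (K i : Set G) with hCdef
    have hCanti : Antitone C := by
      intro a b hab
      exact Set.iUnion₂_mono' fun i hi => ⟨i, le_trans hab hi, le_refl _⟩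
    have hCmeas : ∀ m, MeasurableSet (C m) := by
      intro m
      exact (isOpen_iUnion fun i => isOpen_iUnion fun _ => (hKmem i).2.1).measurableSet
    have hCge : ∀ m, ((n : ℝ≥0∞))⁻¹ ≤ μ (C m) := by
      intro m
      refine le_trans (hμK m) (measure_mono ?_)
      exact Set.subset_iUnion₂ (s := fun i _ => (K i : Set G)) m (le_refl m)
    have hμCtop : μ (C 0) ≠ ⊤ :=
      ne_top_of_le_ne_top (by rw [hμuniv]; exact ENNReal.one_ne_top)
        (measure_mono (Set.subset_univ _))
    have hL : ((n : ℝ≥0∞))⁻¹ ≤ μ (⋂ m, C m) := by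
      rw [Antitone.measure_iInter hCanti (fun m => (hCmeas m).nullMeasurableSet) ⟨0, hμCtop⟩]
      exact le_iInf hCge
    -- the limsup is contained in {1}
    have hsub : (⋂ m, C m) ⊆ ({1} : Set G) := by
      intro z hz
      simp only [Set.mem_iInter] at hz
      by_contra hz1
      have hz1' : z ≠ 1 := fun h => hz1 (h ▸ rfl)
      -- z lies in infinitely many K i
      have hB : {i : ℕ | z ∈ K i}.Infinite := by
        by_contra hBfin
        rw [Set.not_infinite] at hBfin
        obtain ⟨b, hb⟩ := hBfin.bddAbove
        have := hz (b + 1)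
        rw [Set.mem_iUnion₂] at this
        obtain ⟨i, hmi, hzi⟩ := this
        have : i ≤ b := hb hzi
        omega
      set B := {i : ℕ | z ∈ K i} with hBdef
      set Z : Subgroup G := ⨅ i : ↥B, K i.val with hZdef
      have hZle : ∀ i : ℕ, z ∈ K i → Z ≤ K i := fun i hi => iInf_le _ (⟨i, hi⟩ : ↥B)
      have hZnorm : Z.Normal := auxNormalIInf _ fun i => (hKmem i.val).1
      have hZclosed : IsClosed (Z : Set G) := by
        rw [hZdef, Subgroup.coe_iInf]
        exact isClosed_iInter fun i =>
          Subgroup.isClosed_of_isOpen _ (hKmem i.val).2.1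
      have hZbot : Z ≠ ⊥ := by
        intro h
        have hzZ : z ∈ Z := Subgroup.mem_iInf.2 fun i => i.2
        rw [h, Subgroup.mem_bot] at hzZ
        exact hz1' hzZ
      have hZfin : Z.FiniteIndex := hG.2 Z hZnorm hZclosed hZbot
      haveI : Finite (G ⧸ Z) := Z.finite_quotient_of_finiteIndex
      have habove := auxAboveFinite Z
      refine hB (Set.Finite.of_finite_image (habove.subset ?_) hKinj.injOn)
      rintro H ⟨i, hi, rfl⟩
      exact hZle i hi
    -- conclude: the singleton {1} has measure at least n⁻¹
    have h1 : ((n : ℝ≥0∞))⁻¹ ≤ μ ({1} : Set G) := le_trans hL (measure_mono hsub)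
    -- all singletons have the same measure
    have hg : ∀ g : G, μ ({g} : Set G) = μ ({1} : Set G) := by
      intro g
      have hset : ({g} : Set G) = (fun x => g⁻¹ * x) ⁻¹' ({1} : Set G) := by
        ext x
        simp [inv_mul_eq_one, eq_comm]
      rw [hset]
      exact measure_preimage_mul μ g⁻¹ _
    -- n is positive
    have hn1 : 1 ≤ n := by
      have h0 : (K 0).index ≠ 0 := (auxFiniteIndexOfIsOpen (hKmem 0).2.1).index_ne_zero
      have := (hKmem 0).2.2
      omega
    have hn0' : (n : ℝ≥0∞) ≠ 0 := by exact_mod_cast (by omega : n ≠ 0)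
    have hntop : (n : ℝ≥0∞) ≠ ⊤ := ENNReal.natCast_ne_top _
    -- choose n+1 distinct points
    obtain ⟨s, hscard⟩ := Infinite.exists_subset_card_eq G (n + 1)
    have hcoe : (↑s : Set G) = ⋃ g ∈ s, ({g} : Set G) := by
      ext x; simp
    have hμs : μ (↑s : Set G) = ∑ g ∈ s, μ ({g} : Set G) := by
      rw [hcoe]
      exact measure_biUnion_finset
        (fun a _ b _ hab => Set.disjoint_singleton.2 hab)
        (fun b _ => measurableSet_singleton b)
    have hsum : ((n + 1 : ℕ) : ℝ≥0∞) * μ ({1} : Set G) ≤ 1 := by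
      calc ((n + 1 : ℕ) : ℝ≥0∞) * μ ({1} : Set G)
          = (s.card : ℝ≥0∞) * μ ({1} : Set G) := by rw [hscard]
        _ = ∑ g ∈ s, μ ({g} : Set G) := by
            rw [Finset.sum_congr rfl fun g _ => hg g, Finset.sum_const, nsmul_eq_mul]
        _ = μ (↑s : Set G) := hμs.symm
        _ ≤ μ Set.univ := measure_mono (Set.subset_univ _)
        _ = 1 := hμuniv
    have hfinal : ((n + 1 : ℕ) : ℝ≥0∞) ≤ (n : ℝ≥0∞) := by
      have h2 : ((n + 1 : ℕ) : ℝ≥0∞) * (n : ℝ≥0∞)⁻¹ ≤ 1 :=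
        le_trans (mul_le_mul_right h1 _) hsum
      calc ((n + 1 : ℕ) : ℝ≥0∞)
          = ((n + 1 : ℕ) : ℝ≥0∞) * (n : ℝ≥0∞)⁻¹ * (n : ℝ≥0∞) := by
            rw [mul_assoc, ENNReal.inv_mul_cancel hn0' hntop, mul_one]
        _ ≤ 1 * (n : ℝ≥0∞) := mul_le_mul_left h2 _
        _ = (n : ℝ≥0∞) := one_mul _
    have : n + 1 ≤ n := by exact_mod_cast hfinal
    omega

end Aux

/-- Theorem C (iii): if `G` is a just infinite profinite group and `𝓘_n` is the
(finite) set of closed subgroups of `G` containing `I⊲_n(G)`, then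
`ob*_G(n) ≤ ∏_{L ∈ 𝓘_n} |G : L| ⬝ ob_L(n)`.  (The product is a `finprod`, which is
meaningful since `𝓘_n` is indeed a finite set.) -/
theorem obStarFun_le_prod (G : Type*) [Group G] [TopologicalSpace G]
    [IsTopologicalGroup G] [CompactSpace G] [T2Space G] [TotallyDisconnectedSpace G]
    (hG : JustInfinite G) (n : ℕ) (hn : 0 < n) :
    obStarFun G n ≤
      ∏ᶠ (L : Subgroup G) (_ : IsClosed (L : Set G) ∧ normalIndexCap G n ≤ L),
        Cardinal.mk (G ⧸ L) * obFun ↥L n := by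
  classical
  set I : Subgroup G := normalIndexCap G n with hIdef
  have hIopen : IsOpen (I : Set G) := auxNormalIndexCapIsOpen hG n
  have hIfin : I.FiniteIndex := auxFiniteIndexOfIsOpen hIopen
  haveI : Finite (G ⧸ I) := I.finite_quotient_of_finiteIndex
  -- the family 𝓘_n is finite
  have hPfin : {L : Subgroup G | IsClosed (L : Set G) ∧ normalIndexCap G n ≤ L}.Finite :=
    (auxAboveFinite I).subset fun L hL => hL.2
  set ι := {L : Subgroup G // IsClosed (L : Set G) ∧ normalIndexCap G n ≤ L} with hι
  haveI hfinι : Finite ι := hPfin.to_subtype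
  haveI : Fintype ι := Fintype.ofFinite ι
  set f : ι → Subgroup G := fun L => (OI (↥L.val) n).map L.val.subtype with hf
  -- Part B: the intersection of the OI_n(L) is contained in OI*_n(G)
  have hM : (⨅ i : ι, f i) ≤ OIstar G n := by
    intro x hx
    rw [Subgroup.mem_iInf] at hx
    have hxI : x ∈ I := by
      have hPI : IsClosed (I : Set G) ∧ normalIndexCap G n ≤ I :=
        ⟨Subgroup.isClosed_of_isOpen _ hIopen, le_refl _⟩
      exact Subgroup.map_subtype_le _ (hx ⟨I, hPI⟩)
    refine Subgroup.mem_inf.2 ⟨hxI, ?_⟩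
    rw [Subgroup.mem_iInf]
    intro K
    rw [Subgroup.mem_iInf]
    rintro ⟨hKopen, hKnormz, hKnle⟩
    -- the subgroup L = K ⊔ I
    set L : Subgroup G := K ⊔ I with hLdef
    have hKL : K ≤ L := le_sup_left
    have hIL : I ≤ L := le_sup_right
    have hLopen : IsOpen (L : Set G) := Subgroup.isOpen_mono hKL hKopen
    have hPL : IsClosed (L : Set G) ∧ normalIndexCap G n ≤ L :=
      ⟨Subgroup.isClosed_of_isOpen _ hLopen, hIL⟩
    obtain ⟨y, hy, hyx⟩ := Subgroup.mem_map.1 (hx ⟨L, hPL⟩)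
    -- K as a subgroup of L
    have hLnormz : L ≤ Subgroup.normalizer (K : Set G) := sup_le Subgroup.le_normalizer hKnormz
    have hK'norm : (K.subgroupOf L).Normal := by
      rw [Subgroup.normal_subgroupOf_iff hKL]
      intro h k hh hk
      exact (Subgroup.mem_normalizer_iff.1 (hLnormz hk) h).1 hh
    have hK'open : IsOpen ((K.subgroupOf L : Subgroup ↥L) : Set ↥L) := by
      have : ((K.subgroupOf L : Subgroup ↥L) : Set ↥L) =
          (Subtype.val : ↥L → G) ⁻¹' (K : Set G) := by
        rw [Subgroup.subgroupOf, Subgroup.coe_comap, Subgroup.coe_subtype]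
      rw [this]
      exact hKopen.preimage continuous_subtype_val
    -- normalIndexCap of L is contained in I ∩ L
    have hcapL : normalIndexCap (↥L) n ≤ I.subgroupOf L := by
      intro w hw
      have hw' : ∀ K' : Subgroup ↥L,
          (K'.Normal ∧ IsOpen (K' : Set ↥L) ∧ K'.index ≤ n) → w ∈ K' := by
        intro K' hK'
        have := Subgroup.mem_iInf.1 hw K'
        exact Subgroup.mem_iInf.1 this hK'
      rw [Subgroup.mem_subgroupOf]
      rw [hIdef, normalIndexCap, Subgroup.mem_iInf]
      intro N
      rw [Subgroup.mem_iInf]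
      rintro ⟨hNnorm, hNopen, hNidx⟩
      haveI : N.Normal := hNnorm
      haveI : N.FiniteIndex := auxFiniteIndexOfIsOpen hNopen
      have h1 : (N.subgroupOf L).Normal := Subgroup.normal_subgroupOf
      have h2 : IsOpen ((N.subgroupOf L : Subgroup ↥L) : Set ↥L) := by
        have : ((N.subgroupOf L : Subgroup ↥L) : Set ↥L) =
            (Subtype.val : ↥L → G) ⁻¹' (N : Set G) := by
          rw [Subgroup.subgroupOf, Subgroup.coe_comap, Subgroup.coe_subtype]
        rw [this]
        exact hNopen.preimage continuous_subtype_val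
      have h3 : (N.subgroupOf L).index ≤ n := by
        have hdvd : (N.subgroupOf L).index ∣ N.index :=
          Subgroup.relIndex_dvd_index_of_normal N L
        have hpos : 0 < N.index := Nat.pos_of_ne_zero Subgroup.FiniteIndex.index_ne_zero
        exact le_trans (Nat.le_of_dvd hpos hdvd) hNidx
      exact Subgroup.mem_subgroupOf.1 (hw' (N.subgroupOf L) ⟨h1, h2, h3⟩)
    -- K (inside L) is not below normalIndexCap L n
    have hK'nle : ¬ K.subgroupOf L ≤ normalIndexCap (↥L) n := by
      intro hle
      apply hKnle
      intro k hk
      have hkL : k ∈ L := hKL hk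
      have : (⟨k, hkL⟩ : ↥L) ∈ K.subgroupOf L := Subgroup.mem_subgroupOf.2 hk
      have := hcapL (hle this)
      exact Subgroup.mem_subgroupOf.1 this
    -- conclude x ∈ K
    have hyK : y ∈ K.subgroupOf L := by
      have hy2 := (Subgroup.mem_inf.1 hy).2
      have := Subgroup.mem_iInf.1 hy2 (K.subgroupOf L)
      exact Subgroup.mem_iInf.1 this ⟨hK'norm, hK'open, hK'nle⟩
    have hxy : (y : G) = x := hyx
    have : (y : G) ∈ K := Subgroup.mem_subgroupOf.1 hyK
    rwa [hxy] at this
  -- Part C: cardinal bookkeeping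
  have hsurj : Function.Surjective (Subgroup.quotientMapOfLE hM) := by
    intro q
    refine QuotientGroup.induction_on q fun g => ?_
    exact ⟨QuotientGroup.mk g, Subgroup.quotientMapOfLE_apply_mk hM g⟩
  have hstep1 : obStarFun G n ≤ Cardinal.mk (G ⧸ ⨅ i : ι, f i) :=
    Cardinal.mk_le_of_surjective hsurj
  have hstep2 : Cardinal.mk (G ⧸ ⨅ i : ι, f i) ≤ Cardinal.mk (∀ i : ι, G ⧸ f i) :=
    Cardinal.mk_le_of_injective (Subgroup.quotientiInfEmbedding f).injective
  have hfactor : ∀ i : ι, Cardinal.mk (G ⧸ f i) =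
      Cardinal.mk (G ⧸ i.val) * obFun (↥i.val) n := by
    intro i
    have hle : f i ≤ i.val := Subgroup.map_subtype_le _
    have hsub : (f i).subgroupOf i.val = OI (↥i.val) n :=
      Subgroup.comap_map_eq_self_of_injective i.val.subtype_injective _
    calc Cardinal.mk (G ⧸ f i)
        = Cardinal.mk ((G ⧸ i.val) × (↥i.val ⧸ (f i).subgroupOf i.val)) :=
          Cardinal.mk_congr (Subgroup.quotientEquivProdOfLE hle)
      _ = Cardinal.mk (G ⧸ i.val) * Cardinal.mk (↥i.val ⧸ (f i).subgroupOf i.val) := by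
          rw [Cardinal.mk_prod, Cardinal.lift_id, Cardinal.lift_id]
      _ = Cardinal.mk (G ⧸ i.val) * obFun (↥i.val) n := by rw [hsub]; rfl
  have hstep3 : Cardinal.mk (∀ i : ι, G ⧸ f i) =
      ∏ i : ι, (Cardinal.mk (G ⧸ i.val) * obFun (↥i.val) n) := by
    rw [Cardinal.mk_pi]
    rw [Cardinal.prod_eq_of_fintype, Cardinal.lift_id]
    exact Finset.prod_congr rfl fun i _ => hfactor i
  have hstep4 : (∏ᶠ (L : Subgroup G) (_ : IsClosed (L : Set G) ∧ normalIndexCap G n ≤ L),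
      Cardinal.mk (G ⧸ L) * obFun ↥L n) =
      ∏ i : ι, (Cardinal.mk (G ⧸ i.val) * obFun (↥i.val) n) := by
    have h1 : (∏ᶠ (L : Subgroup G) (_ : IsClosed (L : Set G) ∧ normalIndexCap G n ≤ L),
        Cardinal.mk (G ⧸ L) * obFun ↥L n) =
        ∏ L ∈ hPfin.toFinset, Cardinal.mk (G ⧸ L) * obFun ↥L n :=
      finprod_mem_eq_finite_toFinset_prod _ hPfin
    rw [h1]
    exact Finset.prod_subtype hPfin.toFinset
      (fun L => by simp [Set.Finite.mem_toFinset]) _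
  calc obStarFun G n ≤ Cardinal.mk (G ⧸ ⨅ i : ι, f i) := hstep1
    _ ≤ Cardinal.mk (∀ i : ι, G ⧸ f i) := hstep2
    _ = ∏ i : ι, (Cardinal.mk (G ⧸ i.val) * obFun (↥i.val) n) := hstep3
    _ = _ := hstep4.symm
end

section
/- Let G be a profinite group and let H be a closed normal subgroup of G. Then Φ⊲(H) ≤ Φ⊲(G). -/
/-- The normal Frattini subgroup `Φ⊲(G)`: the intersection of the open normal
subgroups with simple quotient (equivalently, of all maximal closed normal
subgroups). -/
def normalFrattini (G : Type*) [Group G] [TopologicalSpace G] : Subgroup G :=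
  ⨅ (N : Subgroup G) (_ : ∃ _hN : N.Normal, IsOpen (N : Set G) ∧ IsSimpleGroup (G ⧸ N)), N

/-- If `H` is a closed normal subgroup of a profinite group `G`, then
`Φ⊲(H) ≤ Φ⊲(G)`. -/
theorem normalFrattini_le_of_normal (G : Type*) [Group G] [TopologicalSpace G]
    [IsTopologicalGroup G] [CompactSpace G] [T2Space G] [TotallyDisconnectedSpace G]
    (H : Subgroup G) (hHnorm : H.Normal) (hHcl : IsClosed (H : Set G)) :
    (normalFrattini ↥H).map H.subtype ≤ normalFrattini G := by
  refine le_iInf₂ fun N hN => ?_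
  obtain ⟨hNnorm, hNopen, hNsimple⟩ := hN
  by_cases hHN : H ≤ N
  · exact le_trans (Subgroup.map_subtype_le _) hHN
  · -- the map H →* G/N is surjective
    set f : ↥H →* G ⧸ N := (QuotientGroup.mk' N).comp H.subtype with hf
    have hker : f.ker = N.subgroupOf H := by
      ext x
      simp [hf, MonoidHom.mem_ker, QuotientGroup.eq_one_iff, Subgroup.mem_subgroupOf]
    have hrange_norm : f.range.Normal := by
      have : f.range = H.map ((QuotientGroup.mk' N)) := by
        rw [hf, MonoidHom.range_comp, Subgroup.range_subtype]
      rw [this]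
      exact Subgroup.Normal.map hHnorm _ (QuotientGroup.mk'_surjective N)
    have hsurj : Function.Surjective f := by
      rcases hrange_norm.eq_bot_or_eq_top with hbot | htop
      · exfalso
        apply hHN
        intro x hx
        have : f ⟨x, hx⟩ ∈ f.range := ⟨⟨x, hx⟩, rfl⟩
        rw [hbot, Subgroup.mem_bot] at this
        have : (⟨x, hx⟩ : ↥H) ∈ f.ker := this
        rw [hker] at this
        exact this
      · rw [← MonoidHom.range_eq_top]
        exact htop
    have hKnorm : (N.subgroupOf H).Normal := hNnorm.subgroupOf H
    have hKopen : IsOpen ((N.subgroupOf H : Subgroup ↥H) : Set ↥H) := by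
      have : ((N.subgroupOf H : Subgroup ↥H) : Set ↥H) = Subtype.val ⁻¹' (N : Set G) := rfl
      rw [this]
      exact hNopen.preimage continuous_subtype_val
    have hKsimple : IsSimpleGroup (↥H ⧸ N.subgroupOf H) := by
      have e : (↥H ⧸ N.subgroupOf H) ≃* G ⧸ N :=
        (QuotientGroup.quotientMulEquivOfEq hker.symm).trans
          (QuotientGroup.quotientKerEquivOfSurjective f hsurj)
      have : Nontrivial (↥H ⧸ N.subgroupOf H) := e.toEquiv.nontrivial
      exact IsSimpleGroup.isSimpleGroup_of_surjective e.symm.toMonoidHom e.symm.surjective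
    have hle : normalFrattini ↥H ≤ N.subgroupOf H :=
      iInf₂_le (N.subgroupOf H) ⟨hKnorm, hKopen, hKsimple⟩
    rintro x ⟨y, hy, rfl⟩
    exact hle hy
end

section
/- Let G be a profinite group such that Φ⊲(G) is trivial. Then G is isomorphic, as a topological group, to a Cartesian product ∏_{i ∈ I} S_i of finite simple groups S_i (each factor either cyclic of prime order or non-abelian finite simple), with the product topology. In particular, the finite radical Fin(G) is dense in G. -/
universe u

open QuotientGroup Pointwise

section Aux

variable {G : Type u} [Group G]

lemma NF_mem_finset_inf {F : Finset (Subgroup G)} {g : G} :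
    g ∈ F.inf id ↔ ∀ N ∈ F, g ∈ N := by
  classical
  induction F using Finset.induction_on with
  | empty => simp
  | insert _ _ ha ih => simp [ha, ih, Subgroup.mem_inf]

lemma NF_normal_finset_inf {F : Finset (Subgroup G)} (h : ∀ N ∈ F, (N : Subgroup G).Normal) :
    (F.inf id).Normal := by
  constructor
  intro n hn g
  rw [NF_mem_finset_inf] at hn ⊢
  intro N hN
  exact (h N hN).conj_mem n (hn N hN) g

lemma NF_sup_eq_top {D M : Subgroup G} (hD : D.Normal) [hM : M.Normal]
    (hs : IsSimpleGroup (G ⧸ M)) (hnle : ¬ D ≤ M) : D ⊔ M = ⊤ := by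
  rcases (hD.map (QuotientGroup.mk' M) (QuotientGroup.mk'_surjective M)).eq_bot_or_eq_top with h | h
  · exact absurd (fun x hx => by
      have hx' : QuotientGroup.mk' M x ∈ D.map (QuotientGroup.mk' M) :=
        Subgroup.mem_map_of_mem _ hx
      rw [h, Subgroup.mem_bot] at hx'
      exact (QuotientGroup.eq_one_iff x).mp hx') hnle
  · rw [eq_top_iff]
    intro g _
    have hg : (g : G ⧸ M) ∈ D.map (QuotientGroup.mk' M) := by rw [h]; trivial
    obtain ⟨d, hd, hdg⟩ := hg
    have hm : d⁻¹ * g ∈ M := QuotientGroup.eq.mp hdg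
    have : g = d * (d⁻¹ * g) := by group
    rw [this]
    exact mul_mem (Subgroup.mem_sup_left hd) (Subgroup.mem_sup_right hm)

lemma NF_exists_mk_eq {D M : Subgroup G} [M.Normal] (h : D ⊔ M = ⊤) (q : G ⧸ M) :
    ∃ d ∈ D, (QuotientGroup.mk d : G ⧸ M) = q := by
  obtain ⟨g, rfl⟩ := QuotientGroup.mk_surjective q
  have hg : g ∈ ((D ⊔ M : Subgroup G) : Set G) := by rw [h]; trivial
  rw [Subgroup.mul_normal D M] at hg
  obtain ⟨d, hd, m, hm, rfl⟩ := hg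
  exact ⟨d, hd, (QuotientGroup.mk_mul_of_mem d hm).symm⟩

/-- Surjectivity onto the quotients indexed by a finite set of subgroups. -/
def NFSurjOn (F : Finset (Subgroup G)) : Prop :=
  ∀ x : ∀ N : Subgroup G, G ⧸ N, ∃ g : G, ∀ N ∈ F, (QuotientGroup.mk g : G ⧸ N) = x N

/-- Independence of a family of normal subgroups. -/
def NFIndep (T : Set (Subgroup G)) : Prop :=
  ∀ F : Finset (Subgroup G), ↑F ⊆ T → NFSurjOn F

lemma NFIndep_empty : NFIndep (∅ : Set (Subgroup G)) := by
  intro F hF x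
  exact ⟨1, fun N hN => absurd (hF hN) (Set.notMem_empty _)⟩

lemma NFIndep_insert {T : Set (Subgroup G)} (hT : ∀ N ∈ T, (N : Subgroup G).Normal)
    (hI : NFIndep T) {M : Subgroup G} [hMn : M.Normal] (hs : IsSimpleGroup (G ⧸ M))
    (hKM : ¬ sInf T ≤ M) : NFIndep (insert M T) := by
  classical
  intro F hF x
  set F₀ := F.erase M with hF₀def
  have hF₀T : ↑F₀ ⊆ T := by
    intro N hN
    rw [Finset.coe_erase, Set.mem_diff] at hN
    rcases hF hN.1 with h | h
    · exact absurd h hN.2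
    · exact h
  obtain ⟨g, hg⟩ := hI F₀ hF₀T x
  by_cases hMF : M ∈ F
  · have hDn : (F₀.inf id).Normal := NF_normal_finset_inf (fun N hN => hT N (hF₀T hN))
    have hDM : ¬ F₀.inf id ≤ M := fun hle =>
      hKM (le_trans (Finset.le_inf fun N hN => sInf_le (hF₀T hN)) hle)
    have hsup := NF_sup_eq_top hDn hs hDM
    obtain ⟨d, hd, hdq⟩ := NF_exists_mk_eq hsup ((QuotientGroup.mk g : G ⧸ M)⁻¹ * x M)
    refine ⟨g * d, fun N hN => ?_⟩
    by_cases hNM : N = M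
    · subst hNM
      rw [QuotientGroup.mk_mul, hdq, mul_inv_cancel_left]
    · have hNF₀ : N ∈ F₀ := Finset.mem_erase.mpr ⟨hNM, hN⟩
      have hdN : d ∈ N := (Finset.inf_le hNF₀ : F₀.inf id ≤ id N) hd
      rw [QuotientGroup.mk_mul_of_mem g hdN]
      exact hg N hNF₀
  · refine ⟨g, fun N hN => hg N ?_⟩
    exact Finset.mem_erase.mpr ⟨fun h => hMF (h ▸ hN), hN⟩

lemma NF_chain_finset {α : Type*} {c : Set (Set α)} (hc : IsChain (· ⊆ ·) c)
    {F : Finset α} (hne : F.Nonempty) (hsub : ↑F ⊆ ⋃₀ c) : ∃ t ∈ c, ↑F ⊆ t := by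
  classical
  induction F using Finset.induction_on with
  | empty => exact absurd hne (by simp)
  | @insert a s ha ih =>
    obtain ⟨t, htc, hat⟩ := hsub (by simp : a ∈ (↑(insert a s) : Set α))
    by_cases hs : s.Nonempty
    · obtain ⟨u, huc, hsu⟩ := ih hs (fun y hy => hsub (by
        simp only [Finset.coe_insert, Set.mem_insert_iff]; right; exact_mod_cast hy))
      rcases hc.total htc huc with h | h
      · exact ⟨u, huc, by
          intro y hy
          rw [Finset.coe_insert, Set.mem_insert_iff] at hy
          rcases hy with rfl | hy
          · exact h hat
          · exact hsu hy⟩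
      · exact ⟨t, htc, by
          intro y hy
          rw [Finset.coe_insert, Set.mem_insert_iff] at hy
          rcases hy with rfl | hy
          · exact hat
          · exact h (hsu hy)⟩
    · rw [Finset.not_nonempty_iff_eq_empty] at hs
      subst hs
      exact ⟨t, htc, by simp [hat]⟩

end Aux

/-- If `G` is a profinite group with trivial normal Frattini subgroup, then `G` is
isomorphic as a topological group to a Cartesian product of finite simple groups
(each discrete, the product carrying the product topology); in particular the finite
radical of `G` (the union of its finite normal subgroups) is dense. -/
theorem structure_of_trivial_normalFrattini (G : Type u) [Group G] [TopologicalSpace G]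
    [IsTopologicalGroup G] [CompactSpace G] [T2Space G] [TotallyDisconnectedSpace G]
    (hPhi : normalFrattini G = ⊥) :
    (∃ (I : Type u) (S : I → Type u) (_ : ∀ i, Group (S i)),
      (∀ i, Finite (S i)) ∧ (∀ i, IsSimpleGroup (S i)) ∧
      ∃ e : G ≃* (∀ i, S i),
        @Continuous G (∀ i, S i) _ (@Pi.topologicalSpace I S fun _ => ⊥) ⇑e ∧
        @Continuous (∀ i, S i) G (@Pi.topologicalSpace I S fun _ => ⊥) _ ⇑e.symm) ∧
    Dense {x : G | ∃ N : Subgroup G, N.Normal ∧ (N : Set G).Finite ∧ x ∈ N} := by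
  classical
  set 𝒮 : Set (Subgroup G) :=
    {N | ∃ _hN : N.Normal, IsOpen (N : Set G) ∧ IsSimpleGroup (G ⧸ N)} with h𝒮
  obtain ⟨T, hmax⟩ : ∃ T, Maximal (fun T => T ⊆ 𝒮 ∧ NFIndep T) T := by
    apply zorn_subset
    intro c hc hchain
    refine ⟨⋃₀ c, ⟨?_, ?_⟩, fun s hs => Set.subset_sUnion_of_mem hs⟩
    · exact Set.sUnion_subset fun t ht => (hc ht).1
    · intro F hF x
      rcases F.eq_empty_or_nonempty with rfl | hne
      · exact ⟨1, by simp⟩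
      · obtain ⟨t, htc, hFt⟩ := NF_chain_finset hchain hne hF
        exact (hc htc).2 F hFt x
  obtain ⟨hT𝒮, hTI⟩ := hmax.1
  haveI hnorm : ∀ N : T, (N : Subgroup G).Normal := fun N => (hT𝒮 N.2).choose
  have hTn : ∀ N ∈ T, (N : Subgroup G).Normal := fun N hN => (hT𝒮 hN).choose
  have hKbot : sInf T = ⊥ := by
    by_contra hK
    have hex : ∃ M, (M ∈ 𝒮) ∧ ¬ sInf T ≤ M := by
      by_contra h
      push_neg at h
      apply hK
      rw [← le_bot_iff, ← hPhi]
      exact le_iInf fun N => le_iInf fun hN => h N hN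
    obtain ⟨M, hM𝒮, hKM⟩ := hex
    have hM𝒮' := hM𝒮
    obtain ⟨hMn, hMo, hMs⟩ := hM𝒮'
    haveI := hMn
    have hMT : M ∉ T := fun h => hKM (sInf_le h)
    have hins : insert M T ⊆ 𝒮 ∧ NFIndep (insert M T) :=
      ⟨Set.insert_subset_iff.mpr ⟨hM𝒮, hT𝒮⟩, NFIndep_insert hTn hTI hMs hKM⟩
    have hsub := hmax.2 hins (Set.subset_insert M T)
    exact hMT (hsub (Set.mem_insert M T))
  haveI hfin : ∀ N : T, Finite (G ⧸ (N : Subgroup G)) :=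
    fun N => Subgroup.quotient_finite_of_isOpen _ (hT𝒮 N.2).choose_spec.1
  have hsimple : ∀ N : T, IsSimpleGroup (G ⧸ (N : Subgroup G)) :=
    fun N => (hT𝒮 N.2).choose_spec.2
  set S : ↥T → Type u := fun N => G ⧸ (N : Subgroup G) with hS
  set φ : G →* ∀ N : ↥T, S N := Pi.monoidHom (fun N => QuotientGroup.mk' (N : Subgroup G))
    with hφ
  have hφapp : ∀ (g : G) (N : ↥T), φ g N = QuotientGroup.mk g := fun g N => rfl
  have hker : φ.ker = sInf T := by
    ext g
    simp only [MonoidHom.mem_ker, funext_iff, Subgroup.mem_sInf]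
    constructor
    · intro h N hN
      haveI := hTn N hN
      have := h ⟨N, hN⟩
      rw [hφapp] at this
      exact (QuotientGroup.eq_one_iff g).mp this
    · intro h N
      rw [hφapp]
      exact (QuotientGroup.eq_one_iff g).mpr (h N N.2)
  have hinj : Function.Injective φ := (MonoidHom.ker_eq_bot_iff φ).mp (hker.trans hKbot)
  have hsurj : Function.Surjective φ := by
    intro x
    have hA : ∀ N : ↥T,
        IsClosed {g : G | (QuotientGroup.mk g : G ⧸ (N : Subgroup G)) = x N} := by
      intro N
      obtain ⟨h, hh⟩ := QuotientGroup.mk_surjective (x N)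
      have heq : {g : G | (QuotientGroup.mk g : G ⧸ (N : Subgroup G)) = x N}
          = h • ((N : Subgroup G) : Set G) := by
        ext z
        rw [Set.mem_smul_set_iff_inv_smul_mem]
        simp only [Set.mem_setOf_eq, smul_eq_mul, SetLike.mem_coe, ← hh]
        rw [eq_comm, QuotientGroup.eq]
      rw [heq]
      exact (Subgroup.isClosed_of_isOpen _ (hT𝒮 N.2).choose_spec.1).smul h
    have hne : (⋂ N : ↥T,
        {g : G | (QuotientGroup.mk g : G ⧸ (N : Subgroup G)) = x N}).Nonempty := by
      by_contra hemp
      rw [Set.not_nonempty_iff_eq_empty] at hemp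
      obtain ⟨u, hu⟩ := IsCompact.elim_finite_subfamily_closed isCompact_univ _ hA
        (by rw [hemp]; simp)
      set x' : ∀ N : Subgroup G, G ⧸ N :=
        fun N => if h : N ∈ T then x ⟨N, h⟩ else QuotientGroup.mk 1 with hx'
      obtain ⟨g, hg⟩ := hTI (u.image Subtype.val)
        (by
          intro N hN
          obtain ⟨N', _, rfl⟩ := Finset.mem_image.mp (Finset.mem_coe.mp hN)
          exact N'.2) x'
      have hmem : g ∈ Set.univ ∩ ⋂ N ∈ u,
          {g : G | (QuotientGroup.mk g : G ⧸ (N : Subgroup G)) = x N} := by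
        refine ⟨trivial, Set.mem_iInter₂.mpr fun N hN => ?_⟩
        have h1 := hg (N : Subgroup G) (Finset.mem_image_of_mem Subtype.val hN)
        rw [hx'] at h1
        simpa [N.2, Subtype.coe_eta] using h1
      rw [hu] at hmem
      exact hmem
    obtain ⟨g, hg⟩ := hne
    rw [Set.mem_iInter] at hg
    exact ⟨g, funext fun N => hg N⟩
  set e : G ≃* ∀ N : ↥T, S N := MulEquiv.ofBijective φ ⟨hinj, hsurj⟩ with he
  have hecoe : ⇑e = ⇑φ := rfl
  letI tS : ∀ N : ↥T, TopologicalSpace (S N) := fun _ => ⊥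
  haveI dS : ∀ N : ↥T, DiscreteTopology (S N) := fun _ => ⟨rfl⟩
  have hconte : Continuous ⇑e := by
    rw [hecoe]
    apply continuous_pi
    intro N
    rw [continuous_discrete_rng]
    intro q
    obtain ⟨h, rfl⟩ := QuotientGroup.mk_surjective q
    have heq : (fun g : G => φ g N) ⁻¹' {QuotientGroup.mk h}
        = h • ((N : Subgroup G) : Set G) := by
      ext z
      rw [Set.mem_smul_set_iff_inv_smul_mem]
      simp only [Set.mem_preimage, Set.mem_singleton_iff, smul_eq_mul, SetLike.mem_coe, hφapp]
      rw [eq_comm, QuotientGroup.eq]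
    rw [heq]
    exact ((hT𝒮 N.2).choose_spec.1).smul h
  have hconte' : Continuous ⇑e.symm := by
    have hco : ⇑e.symm = ⇑(hconte.homeoOfEquivCompactToT2 (f := e.toEquiv)).symm := rfl
    rw [hco]
    exact (hconte.homeoOfEquivCompactToT2 (f := e.toEquiv)).symm.continuous
  refine ⟨⟨↥T, S, fun N => inferInstance, hfin, hsimple, e, hconte, hconte'⟩, ?_⟩
  rw [dense_iff_inter_open]
  rintro U hU ⟨g, hgU⟩
  have hUo : IsOpen (⇑e '' U) := by
    have himg : ⇑e '' U = ⇑e.symm ⁻¹' U := by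
      ext z
      constructor
      · rintro ⟨w, hw, rfl⟩
        simpa using hw
      · intro hz
        exact ⟨e.symm z, hz, by simp⟩
    rw [himg]
    exact hU.preimage hconte'
  obtain ⟨t, v, hv, hsubU⟩ := isOpen_pi_iff.mp hUo (e g) ⟨g, hgU, rfl⟩
  have hyU : (fun N : ↥T => if N ∈ t then e g N else 1) ∈ ⇑e '' U := by
    apply hsubU
    intro N hN
    have hN' : N ∈ t := hN
    show (if N ∈ t then e g N else 1) ∈ v N
    rw [if_pos hN']
    exact (hv N hN).2
  obtain ⟨h, hhU, hhy⟩ := hyU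
  refine ⟨h, hhU, ?_⟩
  set P : Subgroup (∀ N : ↥T, S N) :=
    { carrier := {z | ∀ N ∉ t, z N = 1}
      one_mem' := fun N _ => rfl
      mul_mem' := by
        intro a b ha hb N hN
        rw [Pi.mul_apply, ha N hN, hb N hN, one_mul]
      inv_mem' := by
        intro a ha N hN
        rw [Pi.inv_apply, ha N hN, inv_one] } with hP
  have hPnormal : P.Normal := by
    constructor
    intro z hz a N hN
    rw [Pi.mul_apply, Pi.mul_apply, Pi.inv_apply, hz N hN, mul_one, mul_inv_cancel]
  have hPfin : ((P : Set (∀ N : ↥T, S N))).Finite := by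
    rw [← Set.finite_coe_iff]
    refine Finite.of_injective (fun z (N : ↥(t : Finset ↥T)) => (z : ∀ N : ↥T, S N) N) ?_
    intro z₁ z₂ hz
    ext N
    by_cases hN : N ∈ t
    · exact congrFun hz ⟨N, hN⟩
    · rw [z₁.2 N hN, z₂.2 N hN]
  refine ⟨P.comap φ, hPnormal.comap φ, ?_, ?_⟩
  · have : ((P.comap φ : Subgroup G) : Set G) = ⇑φ ⁻¹' ↑P := rfl
    rw [this]
    exact Set.Finite.preimage (Set.injOn_of_injective hinj) hPfin
  · show φ h ∈ P
    have hφh : φ h = (fun N : ↥T => if N ∈ t then e g N else 1) := hhy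
    rw [hφh]
    intro N hN
    show (if N ∈ t then e g N else 1) = 1
    exact if_neg hN
end

section
/- Let G be a profinite group that is a hereditary Φ⊲-group, and let 𝓚 be an infinite set of closed normal subgroups of G that is upward-closed, in the sense that whenever N₁ ∈ 𝓚 and N₂ is an open normal subgroup of G with N₁ ≤ N₂, then N₂ ∈ 𝓚. Then there is an infinite strictly descending chain K₁ > K₂ > K₃ > ... of open normal subgroups of G with K_i ∈ 𝓚 for all i. -/
open Pointwise


section Aux

variable {G : Type*} [Group G]

/-- Only finitely many subgroups contain a given finite-index subgroup. -/
lemma aux_finite_above_s16 (Φ : Subgroup G) (h : Φ.FiniteIndex) :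
    {H : Subgroup G | Φ ≤ H}.Finite := by
  haveI := h
  have key : ∀ H : Subgroup G, Φ ≤ H → ∀ x : G,
      x ∈ H ↔ (QuotientGroup.mk x : G ⧸ Φ) ∈ (QuotientGroup.mk '' (H : Set G)) := by
    intro H hΦH x
    constructor
    · exact fun hx => ⟨x, hx, rfl⟩
    · rintro ⟨y, hy, hxy⟩
      have h1 : y⁻¹ * x ∈ Φ := QuotientGroup.eq.mp hxy
      have h2 : y⁻¹ * x ∈ H := hΦH h1
      simpa [mul_assoc] using mul_mem hy h2
  have hinj : Set.InjOn
      (fun H : Subgroup G => (QuotientGroup.mk '' (H : Set G) : Set (G ⧸ Φ)))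
      {H : Subgroup G | Φ ≤ H} := by
    intro H1 h1 H2 h2 heq
    have heq' : (QuotientGroup.mk '' (H1 : Set G) : Set (G ⧸ Φ))
        = QuotientGroup.mk '' (H2 : Set G) := heq
    ext x
    rw [key H1 h1 x, key H2 h2 x, heq']
  exact Set.Finite.of_finite_image (Set.toFinite _) hinj

variable [TopologicalSpace G] [IsTopologicalGroup G]

/-- In a compact totally disconnected group, a closed normal subgroup avoiding an
element is contained in an open normal subgroup avoiding that element. -/
lemma aux_exists_open_normal_above [CompactSpace G] [T2Space G] [TotallyDisconnectedSpace G]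
    {N : Subgroup G} (hNn : N.Normal) (hNc : IsClosed (N : Set G)) {g : G} (hg : g ∉ N) :
    ∃ L : Subgroup G, L.Normal ∧ IsOpen (L : Set G) ∧ N ≤ L ∧ g ∉ L := by
  haveI := hNn
  have hU : IsOpen {x : G | g * x ∉ N} := by
    have h0 : {x : G | g * x ∉ N} = (fun x => g * x) ⁻¹' ((N : Set G)ᶜ) := rfl
    rw [h0]
    exact hNc.isOpen_compl.preimage (continuous_const.mul continuous_id)
  have h1 : (1 : G) ∈ {x : G | g * x ∉ N} := by simpa using hg
  obtain ⟨V, hVclopen, h1V, hVU⟩ := compact_exists_isClopen_in_isOpen hU h1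
  obtain ⟨H, hH⟩ := IsTopologicalGroup.exist_openNormalSubgroup_sub_clopen_nhds_of_one hVclopen h1V
  refine ⟨N ⊔ (H : Subgroup G), inferInstance, Subgroup.isOpen_mono le_sup_right H.isOpen, le_sup_left, ?_⟩
  intro hgmem
  have : g ∈ ((N : Set G) * ((H : Subgroup G) : Set G)) := by
    rw [← Subgroup.normal_mul]
    exact hgmem
  obtain ⟨n, hn, h, hh, hnh⟩ := this
  have hinv : h⁻¹ ∈ (H : Subgroup G) := inv_mem hh
  have : g * h⁻¹ ∉ N := hVU (hH hinv)
  apply this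
  have : g * h⁻¹ = n := by rw [← hnh]; group
  rw [this]; exact hn

/-- Above a proper open normal subgroup there is an open normal subgroup with
simple quotient. -/
lemma aux_exists_max_normal [CompactSpace G]
    {L : Subgroup G} (hLn : L.Normal) (hLo : IsOpen (L : Set G)) (hL : L ≠ ⊤) :
    ∃ M : Subgroup G, ∃ _hn : M.Normal, IsOpen (M : Set G) ∧ L ≤ M ∧ IsSimpleGroup (G ⧸ M) := by
  haveI : Finite (G ⧸ L) := Subgroup.quotient_finite_of_isOpen L hLo
  haveI : L.FiniteIndex := Subgroup.finiteIndex_of_finite_quotient (H := L)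
  have hSfin : {M : Subgroup G | L ≤ M ∧ M ≠ ⊤ ∧ M.Normal}.Finite :=
    (aux_finite_above_s16 L inferInstance).subset (fun M hM => hM.1)
  have hSne : {M : Subgroup G | L ≤ M ∧ M ≠ ⊤ ∧ M.Normal}.Nonempty :=
    ⟨L, le_rfl, hL, hLn⟩
  obtain ⟨M, hMS, hMmax⟩ : ∃ M ∈ {M : Subgroup G | L ≤ M ∧ M ≠ ⊤ ∧ M.Normal}, ∀ M' ∈ {M : Subgroup G | L ≤ M ∧ M ≠ ⊤ ∧ M.Normal}, M ≤ M' → M = M' := by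
    obtain ⟨M, hM⟩ := hSfin.exists_maximal hSne
    exact ⟨M, hM.1, fun M' h h' => le_antisymm h' (hM.2 h h')⟩
  obtain ⟨hLM, hMtop, hMn⟩ := hMS
  haveI := hMn
  refine ⟨M, hMn, Subgroup.isOpen_mono hLM hLo, hLM, ?_⟩
  obtain ⟨x, hx⟩ : ∃ x : G, x ∉ M := by
    by_contra hc
    push_neg at hc
    exact hMtop ((Subgroup.eq_top_iff' M).mpr hc)
  haveI : Nontrivial (G ⧸ M) := ⟨⟨QuotientGroup.mk x, 1, by
      simp only [ne_eq, QuotientGroup.eq_one_iff]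
      exact hx⟩⟩
  constructor
  intro Q hQ
  · 
    set P := Q.comap (QuotientGroup.mk' M) with hP
    haveI hPn : P.Normal := hQ.comap _
    have hMP : M ≤ P := by
      intro y hy
      have : QuotientGroup.mk' M y = 1 := (QuotientGroup.eq_one_iff y).mpr hy
      rw [hP, Subgroup.mem_comap, this]
      exact Q.one_mem
    have hQmap : Q = P.map (QuotientGroup.mk' M) :=
      (Subgroup.map_comap_eq_self_of_surjective (QuotientGroup.mk'_surjective M) Q).symm
    by_cases hPtop : P = ⊤
    · right
      rw [hQmap, hPtop, ← Subgroup.comap_top (QuotientGroup.mk' M)]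
      exact Subgroup.map_comap_eq_self_of_surjective (QuotientGroup.mk'_surjective M) ⊤
    · left
      have hPmem : P ∈ {M' : Subgroup G | L ≤ M' ∧ M' ≠ ⊤ ∧ M'.Normal} :=
        ⟨hLM.trans hMP, hPtop, hPn⟩
      have : M = P := hMmax P hPmem hMP
      rw [hQmap, ← this]
      exact (Subgroup.map_eq_bot_iff _).mpr (le_of_eq (QuotientGroup.ker_mk' M).symm)

/-- The image of the normal Frattini subgroup of a normal subgroup is normal. -/
lemma aux_frattini_map_normal {K : Subgroup G} (hKn : K.Normal) :
    (Subgroup.map K.subtype (normalFrattini ↥K)).Normal := by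
  haveI := hKn
  constructor
  intro n hn g
  rw [Subgroup.mem_map] at hn ⊢
  obtain ⟨x, hx, rfl⟩ := hn
  refine ⟨(MulAut.conjNormal g : MulAut ↥K) x, ?_, by simp⟩
  rw [normalFrattini, Subgroup.mem_iInf] at hx ⊢
  intro N
  rw [Subgroup.mem_iInf]
  rintro ⟨hNn, hNo, hNs⟩
  set e := (MulAut.conjNormal g : MulAut ↥K) with he
  have hcont : Continuous (e : ↥K → ↥K) := by
    rw [continuous_induced_rng]
    have h0 : (Subtype.val ∘ (e : ↥K → ↥K)) = fun x : ↥K => g * (x : G) * g⁻¹ :=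
      funext fun y => MulAut.conjNormal_apply g y
    rw [h0]
    fun_prop
  set M' := N.comap e.toMonoidHom with hM'
  have hmape : M'.map e.toMonoidHom = N :=
    Subgroup.map_comap_eq_self_of_surjective e.surjective N
  have hM'n : M'.Normal := hNn.comap _
  have hM'o : IsOpen (M' : Set ↥K) := by
    have h0 : (M' : Set ↥K) = (e : ↥K → ↥K) ⁻¹' (N : Set ↥K) := rfl
    rw [h0]
    exact hNo.preimage hcont
  have hM's : IsSimpleGroup (↥K ⧸ M') := by
    haveI := hNs
    set e' : ↥K ⧸ M' ≃* ↥K ⧸ N := QuotientGroup.congr M' N e hmape with he'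
    haveI : Nontrivial (↥K ⧸ M') := e'.toEquiv.nontrivial
    exact IsSimpleGroup.isSimpleGroup_of_surjective e'.symm.toMonoidHom e'.symm.surjective
  have hxM' := hx M'
  rw [Subgroup.mem_iInf] at hxM'
  exact hxM' ⟨hM'n, hM'o, hM's⟩

variable [CompactSpace G]

/-- The image of the normal Frattini subgroup of an open subgroup has finite index
if the normal Frattini subgroup does. -/
lemma aux_frattini_map_finiteIndex {K : Subgroup G} (hKo : IsOpen (K : Set G))
    (h : (normalFrattini ↥K).FiniteIndex) :
    (Subgroup.map K.subtype (normalFrattini ↥K)).FiniteIndex := by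
  constructor
  have hle : Subgroup.map K.subtype (normalFrattini ↥K) ≤ K := Subgroup.map_subtype_le _
  rw [← Subgroup.relIndex_mul_index hle]
  apply mul_ne_zero
  · have h0 : (Subgroup.map K.subtype (normalFrattini ↥K)).relIndex K
        = (normalFrattini ↥K).index := by
      unfold Subgroup.relIndex Subgroup.subgroupOf
      rw [Subgroup.comap_map_eq_self_of_injective K.subtype_injective]
    rw [h0]
    exact h.index_ne_zero
  · haveI : Finite (G ⧸ K) := Subgroup.quotient_finite_of_isOpen K hKo
    exact (Subgroup.finiteIndex_of_finite_quotient (H := K)).index_ne_zero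

/-- Every maximal proper open `G`-normal subgroup of an open normal `K` contains
the (image of the) normal Frattini subgroup of `K`. -/
lemma aux_child_contains_frattini {K L : Subgroup G}
    (hKn : K.Normal) (hKo : IsOpen (K : Set G))
    (hLn : L.Normal) (hLo : IsOpen (L : Set G)) (hLK : L < K)
    (hmax : ∀ M : Subgroup G, M.Normal → IsOpen (M : Set G) → L ≤ M → M ≤ K →
      M = L ∨ M = K) :
    Subgroup.map K.subtype (normalFrattini ↥K) ≤ L := by
  haveI := hLn
  set Φ := Subgroup.map K.subtype (normalFrattini ↥K) with hΦ
  haveI hΦn : Φ.Normal := aux_frattini_map_normal hKn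
  have hΦK : Φ ≤ K := Subgroup.map_subtype_le _
  have hsup := hmax (L ⊔ Φ) inferInstance
    (Subgroup.isOpen_mono le_sup_left hLo) le_sup_left (sup_le hLK.le hΦK)
  rcases hsup with hsup | hsup
  · rw [← hsup]; exact le_sup_right
  · exfalso
    -- work inside K
    haveI : CompactSpace ↥K :=
      isCompact_iff_compactSpace.mp ((Subgroup.isClosed_of_isOpen K hKo).isCompact)
    have hL'n : (L.subgroupOf K).Normal := hLn.comap _
    have hL'o : IsOpen ((L.subgroupOf K) : Set ↥K) := by
      have h0 : ((L.subgroupOf K) : Set ↥K) = Subtype.val ⁻¹' (L : Set G) := rfl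
      rw [h0]
      exact hLo.preimage continuous_subtype_val
    have hL'top : L.subgroupOf K ≠ ⊤ := by
      intro hc
      exact hLK.not_ge (Subgroup.subgroupOf_eq_top.mp hc)
    obtain ⟨M₀, hM₀n, hM₀o, hLM₀, hM₀s⟩ := aux_exists_max_normal hL'n hL'o hL'top
    have hnF : normalFrattini ↥K ≤ M₀ := by
      apply iInf₂_le M₀ ⟨hM₀n, hM₀o, hM₀s⟩
    have hLle : L ≤ M₀.map K.subtype := by
      have h1 : (L.subgroupOf K).map K.subtype = L ⊓ K := Subgroup.subgroupOf_map_subtype L K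
      have h2 : L ⊓ K = L := inf_eq_left.mpr hLK.le
      rw [← h2, ← h1]
      exact Subgroup.map_subtype_le_map_subtype.mpr hLM₀
    have hΦle : Φ ≤ M₀.map K.subtype := Subgroup.map_subtype_le_map_subtype.mpr hnF
    have hKle : K ≤ M₀.map K.subtype := by
      conv_lhs => rw [← hsup]
      exact sup_le hLle hΦle
    have hmaptop : Subgroup.map K.subtype ⊤ = K := by
      rw [← MonoidHom.range_eq_map]
      exact K.range_subtype
    have hM₀top : M₀ = ⊤ := by
      apply Subgroup.map_injective K.subtype_injective
      rw [hmaptop]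
      exact le_antisymm (Subgroup.map_subtype_le _) hKle
    haveI := hM₀s
    haveI : Subsingleton (↥K ⧸ M₀) := by
      rw [hM₀top]
      exact QuotientGroup.subsingleton_quotient_top
    exact false_of_nontrivial_of_subsingleton (↥K ⧸ M₀)

end Aux

/-- Let `G` be a profinite group that is a hereditary `Φ⊲`-group, and let `𝓚` be an
infinite, upward-closed set of closed normal subgroups of `G`.  Then there is an
infinite strictly descending chain of open normal subgroups of `G` lying in `𝓚`. -/
theorem descending_chain_of_upward_closed (G : Type*) [Group G] [TopologicalSpace G]
    [IsTopologicalGroup G] [CompactSpace G] [T2Space G] [TotallyDisconnectedSpace G]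
    (hphi : ∀ H : Subgroup G, IsOpen (H : Set G) → (normalFrattini ↥H).FiniteIndex)
    (𝓚 : Set (Subgroup G))
    (h𝓚 : ∀ N ∈ 𝓚, N.Normal ∧ IsClosed (N : Set G))
    (h𝓚inf : 𝓚.Infinite)
    (hup : ∀ N₁ ∈ 𝓚, ∀ N₂ : Subgroup G, N₂.Normal → IsOpen (N₂ : Set G) →
      N₁ ≤ N₂ → N₂ ∈ 𝓚) :
    ∃ K : ℕ → Subgroup G, (∀ i, K i ∈ 𝓚 ∧ (K i).Normal ∧ IsOpen (K i : Set G)) ∧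
      ∀ i, K (i + 1) < K i := by
  classical
  -- the set of open members of 𝓚
  set 𝓕 : Set (Subgroup G) := {N | N ∈ 𝓚 ∧ IsOpen (N : Set G)} with h𝓕
  -- Step 1 : 𝓕 is infinite
  have h𝓕inf : 𝓕.Infinite := by
    intro h𝓕fin
    have hinj : Set.InjOn (fun N : Subgroup G => {L ∈ 𝓕 | N ≤ L}) 𝓚 := by
      have key : ∀ N ∈ 𝓚, ∀ N' ∈ 𝓚, {L ∈ 𝓕 | N ≤ L} = {L ∈ 𝓕 | N' ≤ L} → N' ≤ N := by
        intro N hN N' hN' heq g hg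
        by_contra hgN
        obtain ⟨L, hLn, hLo, hNL, hgL⟩ :=
          aux_exists_open_normal_above (h𝓚 N hN).1 (h𝓚 N hN).2 hgN
        have hL𝓕 : L ∈ 𝓕 := ⟨hup N hN L hLn hLo hNL, hLo⟩
        have hmem : L ∈ {L ∈ 𝓕 | N ≤ L} := ⟨hL𝓕, hNL⟩
        rw [heq] at hmem
        exact hgL (hmem.2 hg)
      intro N1 h1 N2 h2 heq
      exact le_antisymm (key N2 h2 N1 h1 heq.symm) (key N1 h1 N2 h2 heq)
    have himg : ((fun N : Subgroup G => {L ∈ 𝓕 | N ≤ L}) '' 𝓚).Infinite :=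
      h𝓚inf.image hinj
    apply himg
    apply h𝓕fin.finite_subsets.subset
    rintro _ ⟨N, _, rfl⟩
    exact fun L hL => hL.1
  -- the descent predicate
  set P : Subgroup G → Prop := fun K =>
    K ∈ 𝓚 ∧ K.Normal ∧ IsOpen (K : Set G) ∧ {N ∈ 𝓕 | N < K}.Infinite with hPdef
  -- Step 2 : descent
  have step : ∀ K : Subgroup G, P K → ∃ K' : Subgroup G, P K' ∧ K' < K := by
    rintro K ⟨hK𝓚, hKn, hKo, hKinf⟩
    haveI : Finite (G ⧸ K) := Subgroup.quotient_finite_of_isOpen K hKo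
    haveI : K.FiniteIndex := Subgroup.finiteIndex_of_finite_quotient (H := K)
    set Φ := Subgroup.map K.subtype (normalFrattini ↥K) with hΦ
    have hΦfi : Φ.FiniteIndex := aux_frattini_map_finiteIndex hKo (hphi K hKo)
    -- for each N in the fibre set choose a maximal open normal subgroup between N and K
    have hchild : ∀ N ∈ {N ∈ 𝓕 | N < K}, ∃ C : Subgroup G,
        (C ∈ 𝓚 ∧ C.Normal ∧ IsOpen (C : Set G) ∧ N ≤ C ∧ C < K) ∧ Φ ≤ C := by
      rintro N ⟨⟨hN𝓚, hNo⟩, hNK⟩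
      have hNn : N.Normal := (h𝓚 N hN𝓚).1
      haveI : Finite (G ⧸ N) := Subgroup.quotient_finite_of_isOpen N hNo
      haveI : N.FiniteIndex := Subgroup.finiteIndex_of_finite_quotient (H := N)
      set T : Set (Subgroup G) :=
        {C | C.Normal ∧ IsOpen (C : Set G) ∧ N ≤ C ∧ C < K} with hT
      have hTfin : T.Finite :=
        (aux_finite_above_s16 N inferInstance).subset (fun C hC => hC.2.2.1)
      have hTne : T.Nonempty := ⟨N, hNn, hNo, le_rfl, hNK⟩
      obtain ⟨C, hCT, hCmax⟩ : ∃ C ∈ T, ∀ M' ∈ T, C ≤ M' → C = M' := by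
        obtain ⟨C, hC⟩ := hTfin.exists_maximal hTne
        exact ⟨C, hC.1, fun M' h h' => le_antisymm h' (hC.2 h h')⟩
      obtain ⟨hCn, hCo, hNC, hCK⟩ := hCT
      have hmax : ∀ M : Subgroup G, M.Normal → IsOpen (M : Set G) → C ≤ M → M ≤ K →
          M = C ∨ M = K := by
        intro M hMn hMo hCM hMK
        rcases lt_or_eq_of_le hMK with hMK' | hMK'
        · left
          exact (hCmax M ⟨hMn, hMo, hNC.trans hCM, hMK'⟩ hCM).symm
        · right; exact hMK'
      refine ⟨C, ⟨hup N hN𝓚 C hCn hCo hNC, hCn, hCo, hNC, hCK⟩, ?_⟩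
      exact aux_child_contains_frattini hKn hKo hCn hCo hCK hmax
    choose! child hchild1 hchild2 using hchild
    -- pigeonhole: some child has infinitely many N below it
    have hfib : ∃ C : Subgroup G, {N ∈ {N ∈ 𝓕 | N < K} | child N = C}.Infinite := by
      by_contra hc
      push_neg at hc
      apply hKinf
      have hcover : {N ∈ 𝓕 | N < K} ⊆
          ⋃ C ∈ {H : Subgroup G | Φ ≤ H}, {N ∈ {N ∈ 𝓕 | N < K} | child N = C} := by
        intro N hN
        exact Set.mem_biUnion (hchild2 N hN) ⟨hN, rfl⟩
      exact ((aux_finite_above_s16 Φ hΦfi).biUnion (fun C _ => hc C)).subset hcover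
    obtain ⟨C, hCinf⟩ := hfib
    obtain ⟨N₀, hN₀⟩ := hCinf.nonempty
    obtain ⟨hC𝓚, hCn, hCo, _, hCK⟩ := hN₀.2 ▸ hchild1 N₀ hN₀.1
    refine ⟨C, ⟨hC𝓚, hCn, hCo, ?_⟩, hCK⟩
    have hsub : {N ∈ {N ∈ 𝓕 | N < K} | child N = C} \ {C} ⊆ {N ∈ 𝓕 | N < C} := by
      rintro N ⟨⟨hN, hNC⟩, hNne⟩
      refine ⟨hN.1, ?_⟩
      have hle : N ≤ C := hNC ▸ (hchild1 N hN).2.2.2.1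
      exact lt_of_le_of_ne hle (by simpa using hNne)
    exact (hCinf.diff (Set.finite_singleton C)).mono hsub
  -- base case
  obtain ⟨N₀, hN₀⟩ := h𝓚inf.nonempty
  have hPtop : P ⊤ := by
    refine ⟨hup N₀ hN₀ ⊤ inferInstance (by simp) le_top, inferInstance, by simp, ?_⟩
    have : 𝓕 \ {⊤} ⊆ {N ∈ 𝓕 | N < ⊤} := by
      rintro N ⟨hN, hNne⟩
      exact ⟨hN, lt_top_iff_ne_top.mpr (by simpa using hNne)⟩
    exact (h𝓕inf.diff (Set.finite_singleton ⊤)).mono this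
  -- build the chain
  choose nxt hnxtP hnxtlt using step
  let f : ℕ → {K : Subgroup G // P K} := fun n =>
    Nat.rec ⟨⊤, hPtop⟩ (fun _ p => ⟨nxt p.1 p.2, hnxtP p.1 p.2⟩) n
  refine ⟨fun n => (f n).1, fun i => ⟨(f i).2.1, (f i).2.2.1, (f i).2.2.2.1⟩, fun i => ?_⟩
  exact hnxtlt (f i).1 (f i).2
end
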